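/- arXiv:1406.7612 — 15 statements merged into one kernel-verified Lean document; each statement's English description precedes it below -/
import Mathlib

section
/- Let n, N ∈ ℕ and λ* ∈ ℝⁿ. For j = 0,…,N let v_j : ℝⁿ → ℝ be polynomial functions with v_j(λ*) = 0, and let b_j : ℝ × ℝⁿ → ℝ be analytic in a neighborhood of (0, λ*) with b_j(0, λ*) ≠ 0. Let λ : ℝ → ℝⁿ be analytic at 0 with λ(0) = λ*, and for (h, ε) near (0,0) set d(h, ε) = Σ_{j=0}^{N} v_j(λ(ε)) h^{2j+1} b_j(h, λ(ε)). For each j let v̄_{j,r} denote the r-th Taylor coefficient at ε = 0 of the analytic map ε ↦ v_j(λ(ε)), and set B_j(h) = b_j(h, λ*). Fix an integer k ≥ 1 and suppose that for every h in a neighborhood of 0 the Taylor coefficients at ε = 0 of ε ↦ d(h, ε) of all orders r with 0 ≤ r ≤ k−1 vanish; let M_k(h) be its Taylor coefficient of order k. Then v̄_{j,r} = 0 for all j = 0,…,N and all 1 ≤ r ≤ k−1, and M_k(h) = Σ_{j=0}^{N} v̄_{j,k} h^{2j+1} B_j(h) for all h in a neighborhood of 0. -/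
open Filter Finset Topology

private lemma iteratedDerivWithin_isOpen' {n : ℕ} {f : ℝ → ℝ} {s : Set ℝ} {x : ℝ}
    (hs : IsOpen s) (hx : x ∈ s) :
    iteratedDerivWithin n f s x = iteratedDeriv n f x := by
  rw [iteratedDerivWithin_eq_iteratedFDerivWithin, iteratedDeriv_eq_iteratedFDeriv,
    iteratedFDerivWithin_of_isOpen n hs hx]

private lemma an_add {n : ℕ} {f g : ℝ → ℝ} {x : ℝ}
    (hf : AnalyticAt ℝ f x) (hg : AnalyticAt ℝ g x) :
    iteratedDeriv n (fun y => f y + g y) x = iteratedDeriv n f x + iteratedDeriv n g x := by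
  obtain ⟨s, hsx, hs⟩ := (hf.eventually_analyticAt.and hg.eventually_analyticAt).exists_mem
  obtain ⟨t, hts, hto, hxt⟩ := mem_nhds_iff.mp hsx
  have hft : ContDiffOn ℝ n f t := fun y hy => ((hs y (hts hy)).1.contDiffAt).contDiffWithinAt
  have hgt : ContDiffOn ℝ n g t := fun y hy => ((hs y (hts hy)).2.contDiffAt).contDiffWithinAt
  rw [← iteratedDerivWithin_isOpen' hto hxt (f := fun y => f y + g y),
      ← iteratedDerivWithin_isOpen' hto hxt (f := f),
      ← iteratedDerivWithin_isOpen' hto hxt (f := g)]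
  exact iteratedDerivWithin_add hxt hto.uniqueDiffOn (hft x hxt) (hgt x hxt)

private lemma an_sum {n : ℕ} {ι : Type*} (s : Finset ι) (F : ι → ℝ → ℝ) {x : ℝ}
    (hF : ∀ j ∈ s, AnalyticAt ℝ (F j) x) :
    iteratedDeriv n (fun y => ∑ j ∈ s, F j y) x = ∑ j ∈ s, iteratedDeriv n (F j) x := by
  induction s using Finset.cons_induction with
  | empty => simp [iteratedDeriv_eq_iteratedFDeriv, iteratedFDeriv_zero_fun]
  | cons a s ha ih =>
    simp only [Finset.sum_cons]
    rw [an_add (hF a (Finset.mem_cons_self a s))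
        (s.analyticAt_fun_sum (fun j hj => hF j (Finset.mem_cons_of_mem hj))),
      ih (fun j hj => hF j (Finset.mem_cons_of_mem hj))]

private lemma an_deriv {f : ℝ → ℝ} {x : ℝ} (hf : AnalyticAt ℝ f x) :
    AnalyticAt ℝ (deriv f) x := by
  rcases hf.exists_mem_nhds_analyticOnNhd with ⟨s, hs, h⟩
  exact h.deriv x (mem_of_mem_nhds hs)

private lemma keyA : ∀ (r : ℕ) (f g : ℝ → ℝ) (x : ℝ), AnalyticAt ℝ f x → AnalyticAt ℝ g x →
    (∀ s < r, iteratedDeriv s f x = 0) →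
    iteratedDeriv r (fun y => f y * g y) x = iteratedDeriv r f x * g x := by
  intro r
  induction r with
  | zero => intro f g x _ _ _; simp
  | succ r ih =>
    intro f g x hf hg hvan
    rw [iteratedDeriv_succ']
    have hder : (deriv fun y => f y * g y) =ᶠ[𝓝 x]
        fun y => deriv f y * g y + f y * deriv g y := by
      filter_upwards [hf.eventually_analyticAt, hg.eventually_analyticAt] with y hfy hgy
      exact deriv_mul hfy.differentiableAt hgy.differentiableAt
    rw [hder.iteratedDeriv_eq r]
    rw [an_add ((an_deriv hf).fun_mul hg) (hf.fun_mul (an_deriv hg))]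
    have h1 : iteratedDeriv r (fun y => deriv f y * g y) x = iteratedDeriv r (deriv f) x * g x :=
      ih (deriv f) g x (an_deriv hf) hg (fun s hs => by
        rw [show iteratedDeriv s (deriv f) x = iteratedDeriv (s+1) f x from
          (congrFun (iteratedDeriv_succ' (n := s) (f := f)) x).symm]
        exact hvan (s+1) (Nat.succ_lt_succ hs))
    have h2 : iteratedDeriv r (fun y => f y * deriv g y) x = iteratedDeriv r f x * deriv g x :=
      ih f (deriv g) x hf (an_deriv hg) (fun s hs => hvan s (hs.trans r.lt_succ_self))
    rw [h1, h2, hvan r r.lt_succ_self,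
      show iteratedDeriv r (deriv f) x = iteratedDeriv (r+1) f x from
        (congrFun (iteratedDeriv_succ' (n := r) (f := f)) x).symm]
    ring

private lemma zero_coeffs (N : ℕ) (c : ℕ → ℝ) (Bf : ℕ → ℝ → ℝ)
    (hBc : ∀ j ≤ N, ContinuousAt (Bf j) 0) (hB0 : ∀ j ≤ N, Bf j 0 ≠ 0)
    (hsum : ∀ᶠ h in 𝓝 (0:ℝ), ∑ j ∈ Finset.range (N+1), c j * h ^ (2*j+1) * Bf j h = 0) :
    ∀ j ≤ N, c j = 0 := by
  intro m
  induction m using Nat.strong_induction_on with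
  | _ m ih =>
    intro hm
    have hval : ∑ j ∈ Finset.Icc m N, c j * (0:ℝ) ^ (2*(j-m)) * Bf j 0 = c m * Bf m 0 := by
      rw [Finset.sum_eq_single m]
      · simp
      · intro j hj hne
        have hmj : m < j := lt_of_le_of_ne (Finset.mem_Icc.mp hj).1 (Ne.symm hne)
        have h2 : 2*(j-m) ≠ 0 := by omega
        simp [zero_pow h2]
      · intro hmem
        exact absurd (Finset.mem_Icc.mpr ⟨le_rfl, hm⟩) hmem
    have hev : ∀ᶠ h in 𝓝[≠] (0:ℝ),
        (∑ j ∈ Finset.Icc m N, c j * h ^ (2*(j-m)) * Bf j h) = 0 := by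
      filter_upwards [nhdsWithin_le_nhds hsum, self_mem_nhdsWithin] with h hs (hne : h ≠ 0)
      have hsplit : ∑ j ∈ Finset.range (N+1), c j * h ^ (2*j+1) * Bf j h
          = ∑ j ∈ Finset.Icc m N, c j * h ^ (2*j+1) * Bf j h := by
        rw [show Finset.range (N+1) = Finset.Icc 0 N by
          rw [← Nat.Ico_zero_eq_range, Finset.Ico_add_one_right_eq_Icc]]
        rw [← Finset.sum_subset (Finset.Icc_subset_Icc_left (Nat.zero_le m))]
        intro j hj hnot
        have hjm : j < m := by
          simp only [Finset.mem_Icc] at hj hnot; omega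
        rw [ih j hjm (by omega)]
        ring
      have hmul : h ^ (2*m+1) * ∑ j ∈ Finset.Icc m N, c j * h ^ (2*(j-m)) * Bf j h = 0 := by
        rw [Finset.mul_sum]
        rw [show ∑ j ∈ Finset.Icc m N, h ^ (2*m+1) * (c j * h ^ (2*(j-m)) * Bf j h)
            = ∑ j ∈ Finset.Icc m N, c j * h ^ (2*j+1) * Bf j h from
          Finset.sum_congr rfl (fun j hj => by
            have hmj : m ≤ j := (Finset.mem_Icc.mp hj).1
            rw [show (2*j+1) = (2*m+1) + 2*(j-m) by omega, pow_add]; ring)]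
        rw [← hsplit]
        exact hs
      have hp : h ^ (2*m+1) ≠ 0 := pow_ne_zero _ hne
      exact (mul_eq_zero.mp hmul).resolve_left hp
    have h1 : Tendsto (fun h : ℝ => ∑ j ∈ Finset.Icc m N, c j * h ^ (2*(j-m)) * Bf j h)
        (𝓝[≠] (0:ℝ)) (𝓝 (∑ j ∈ Finset.Icc m N, c j * (0:ℝ) ^ (2*(j-m)) * Bf j 0)) :=
      Tendsto.mono_left
        (tendsto_finset_sum _ (fun j hj =>
          (continuousAt_const.mul (continuousAt_pow _ _)).mul (hBc j (Finset.mem_Icc.mp hj).2)))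
        nhdsWithin_le_nhds
    have h2 : Tendsto (fun h : ℝ => ∑ j ∈ Finset.Icc m N, c j * h ^ (2*(j-m)) * Bf j h)
        (𝓝[≠] (0:ℝ)) (𝓝 0) :=
      Tendsto.congr' (EventuallyEq.symm hev) tendsto_const_nhds
    have huniq := tendsto_nhds_unique h1 h2
    rw [hval] at huniq
    exact (mul_eq_zero.mp huniq).resolve_right (hB0 m hm)

private lemma analyticAt_mvpoly {n : ℕ} (p : MvPolynomial (Fin n) ℝ) (lam : ℝ → (Fin n → ℝ))
    (hlam : AnalyticAt ℝ lam 0) :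
    AnalyticAt ℝ (fun ε => MvPolynomial.eval (lam ε) p) 0 := by
  apply p.induction_on (fun k => ?_) (fun p q hp hq => ?_) (fun p i hp => ?_)
  · simp only [MvPolynomial.eval_C]; exact analyticAt_const
  · simp only [map_add]; exact hp.add hq
  · simp only [map_mul, MvPolynomial.eval_X]
    have : AnalyticAt ℝ (fun ε => lam ε i) 0 :=
      ((ContinuousLinearMap.proj (R := ℝ) (φ := fun _ : Fin n => ℝ) i).analyticAt (lam 0)).comp hlam
    exact hp.mul this

/-- Structure of the `k`-th Melnikov function: if the displacement map decomposes as
`d(h,ε) = Σ_j v_j(λ(ε)) h^(2j+1) b_j(h, λ(ε))` with `v_j` polynomial vanishing at `λ*`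
and `b_j` analytic with `b_j(0,λ*) ≠ 0`, and all Taylor coefficients of order `< k`
of `ε ↦ d(h,ε)` vanish near `h = 0`, then all `v̄_{j,r}` vanish for `1 ≤ r ≤ k-1` and
`M_k(h) = Σ_j v̄_{j,k} h^(2j+1) B_j(h)` near `h = 0`. -/
theorem melnikov_structure
    (n N : ℕ) (lamStar : Fin n → ℝ)
    (v : ℕ → (Fin n → ℝ) → ℝ)
    (hvpoly : ∀ j ≤ N, ∃ p : MvPolynomial (Fin n) ℝ,
      ∀ x, v j x = MvPolynomial.eval x p)
    (hvzero : ∀ j ≤ N, v j lamStar = 0)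
    (b : ℕ → ℝ × (Fin n → ℝ) → ℝ)
    (hb : ∀ j ≤ N, AnalyticAt ℝ (b j) (0, lamStar))
    (hb0 : ∀ j ≤ N, b j (0, lamStar) ≠ 0)
    (lam : ℝ → (Fin n → ℝ))
    (hlam : AnalyticAt ℝ lam 0) (hlam0 : lam 0 = lamStar)
    (d : ℝ → ℝ → ℝ)
    (hd : ∀ h ε : ℝ, d h ε =
      ∑ j ∈ Finset.range (N + 1),
        v j (lam ε) * h ^ (2 * j + 1) * b j (h, lam ε))
    (vbar : ℕ → ℕ → ℝ)
    (hvbar : ∀ j r, vbar j r =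
      iteratedDeriv r (fun ε => v j (lam ε)) 0 / r.factorial)
    (B : ℕ → ℝ → ℝ) (hB : ∀ j h, B j h = b j (h, lamStar))
    (k : ℕ) (hk : 1 ≤ k)
    (hflat : ∀ᶠ h in nhds (0 : ℝ), ∀ r < k,
      iteratedDeriv r (fun ε => d h ε) 0 = 0)
    (Mk : ℝ → ℝ)
    (hMk : ∀ h, Mk h = iteratedDeriv k (fun ε => d h ε) 0 / k.factorial) :
    (∀ j ≤ N, ∀ r, 1 ≤ r → r ≤ k - 1 → vbar j r = 0) ∧
    (∀ᶠ h in nhds (0 : ℝ), Mk h =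
      ∑ j ∈ Finset.range (N + 1), vbar j k * h ^ (2 * j + 1) * B j h) := by
  classical
  have hV : ∀ j ≤ N, AnalyticAt ℝ (fun ε => v j (lam ε)) 0 := by
    intro j hj
    obtain ⟨p, hp⟩ := hvpoly j hj
    simp only [hp]
    exact analyticAt_mvpoly p lam hlam
  have hiter : ∀ j r, iteratedDeriv r (fun ε => v j (lam ε)) 0 = (r.factorial : ℝ) * vbar j r := by
    intro j r
    rw [hvbar j r]
    field_simp
  have hBC : ∀ j ≤ N, ContinuousAt (B j) 0 := by
    intro j hj
    have hBfun : B j = fun h => b j (h, lamStar) := funext (hB j)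
    rw [hBfun]
    exact ContinuousAt.comp (g := b j) (f := fun h : ℝ => (h, lamStar)) (x := (0:ℝ))
      (hb j hj).continuousAt ((continuous_id.prodMk continuous_const).continuousAt)
  have hB0' : ∀ j ≤ N, B j 0 ≠ 0 := by
    intro j hj
    rw [hB j 0]
    exact hb0 j hj
  have hGev : ∀ᶠ h in 𝓝 (0:ℝ), ∀ j ∈ Finset.range (N+1),
      AnalyticAt ℝ (fun ε => b j (h, lam ε)) 0 := by
    rw [eventually_all_finset]
    intro j hj
    have hj' : j ≤ N := Nat.lt_succ_iff.mp (Finset.mem_range.mp hj)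
    have hcont : Tendsto (fun h : ℝ => ((h : ℝ), lamStar)) (𝓝 0) (𝓝 (0, lamStar)) :=
      (continuous_id.prodMk continuous_const).continuousAt (x := (0:ℝ))
    filter_upwards [hcont.eventually (hb j hj').eventually_analyticAt] with h hA
    have hpair : AnalyticAt ℝ (fun ε : ℝ => ((h : ℝ), lam ε)) 0 := analyticAt_const.prod hlam
    have hA' : AnalyticAt ℝ (b j) ((fun ε : ℝ => ((h : ℝ), lam ε)) 0) := by
      simpa [hlam0] using hA
    exact AnalyticAt.comp (f := fun ε : ℝ => ((h:ℝ), lam ε)) hA' hpair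
  have claim : ∀ r : ℕ, (∀ j ≤ N, ∀ s, 1 ≤ s → s < r → vbar j s = 0) →
      ∀ᶠ h in 𝓝 (0:ℝ), iteratedDeriv r (fun ε => d h ε) 0
        = ∑ j ∈ Finset.range (N+1),
            ((r.factorial : ℝ) * vbar j r) * h ^ (2*j+1) * B j h := by
    intro r hvan
    filter_upwards [hGev] with h hG
    have hdfun : (fun ε => d h ε) = fun ε => ∑ j ∈ Finset.range (N+1),
        (fun j => fun ε => v j (lam ε) * (h ^ (2*j+1) * b j (h, lam ε))) j ε := by
      funext ε
      rw [hd h ε]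
      exact Finset.sum_congr rfl (fun j hj => by ring)
    rw [hdfun, an_sum _ _ (fun j hj => by
      have hj' : j ≤ N := Nat.lt_succ_iff.mp (Finset.mem_range.mp hj)
      exact (hV j hj').mul (analyticAt_const.mul (hG j hj)))]
    refine Finset.sum_congr rfl (fun j hj => ?_)
    have hj' : j ≤ N := Nat.lt_succ_iff.mp (Finset.mem_range.mp hj)
    rw [keyA r _ _ 0 (hV j hj') (analyticAt_const.fun_mul (hG j hj)) (fun s hs => ?_)]
    · rw [hiter j r, hlam0, ← hB j h]
      ring
    · rcases Nat.eq_zero_or_pos s with hs0 | hs1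
      · subst hs0
        rw [show iteratedDeriv 0 (fun ε => v j (lam ε)) 0 = v j (lam 0) from
          congrFun (iteratedDeriv_zero (f := fun ε => v j (lam ε))) 0]
        rw [hlam0]
        exact hvzero j hj'
      · rw [hiter j s, hvan j hj' s hs1 hs, mul_zero]
  have part1 : ∀ r j, j ≤ N → 1 ≤ r → r ≤ k - 1 → vbar j r = 0 := by
    intro r
    induction r using Nat.strong_induction_on with
    | _ r ih =>
      intro j hj hr1 hrk
      have hcl := claim r (fun j' hj' s hs1 hsr => ih s hsr j' hj' hs1 (by omega))
      have hz : ∀ᶠ h in 𝓝 (0:ℝ), ∑ j ∈ Finset.range (N+1),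
          ((r.factorial:ℝ) * vbar j r) * h ^ (2*j+1) * B j h = 0 := by
        filter_upwards [hcl, hflat] with h h1 h2
        rw [← h1]
        exact h2 r (by omega)
      have hcz := zero_coeffs N (fun j => (r.factorial:ℝ) * vbar j r) B hBC hB0' hz j hj
      have fne : (r.factorial:ℝ) ≠ 0 := Nat.cast_ne_zero.mpr r.factorial_ne_zero
      exact (mul_eq_zero.mp hcz).resolve_left fne
  refine ⟨fun j hj r hr1 hrk => part1 r j hj hr1 hrk, ?_⟩
  have hvank : ∀ j ≤ N, ∀ s, 1 ≤ s → s < k → vbar j s = 0 :=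
    fun j hj s h1 h2 => part1 s j hj h1 (by omega)
  filter_upwards [claim k hvank] with h hcl
  rw [hMk h, hcl, Finset.sum_div]
  refine Finset.sum_congr rfl (fun j hj => ?_)
  have kne : (k.factorial:ℝ) ≠ 0 := Nat.cast_ne_zero.mpr k.factorial_ne_zero
  field_simp
end

section
/- (Generic Lotka–Volterra case.) Assume λ_{1,0} = 0, λ_{3,0} = λ_{6,0} and λ_{5,0} ≠ 0. Let k ≥ 1 be an integer and suppose v̄_{1,j} = v̄_{3,j} = 0 for all 0 ≤ j ≤ k−1. Then v̄_{1,k} = λ_{1,k}, v̄_{3,k} = λ_{5,0}(λ_{3,k} − λ_{6,k}), v̄_{5,k} = λ_{2,0} λ_{4,0}² (λ_{3,k} − λ_{6,k}), and v̄_{7,k} = 0. -/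
open PowerSeries

private lemma coeff_mul_of_lt_vanish (f d : PowerSeries ℝ) (k : ℕ)
    (hd : ∀ j < k, coeff j d = 0) :
    coeff k (f * d) = coeff 0 f * coeff k d := by
  rw [PowerSeries.coeff_mul]
  refine Finset.sum_eq_single_of_mem (0, k) (by simp) ?_
  rintro ⟨a, b⟩ hab hne
  simp only [Finset.HasAntidiagonal.mem_antidiagonal] at hab
  have ha : a ≠ 0 := by
    rintro rfl
    exact hne (by simp [← hab])
  have hb : b < k := by omega
  simp [hd b hb]

/-- Generic Lotka–Volterra case. -/
theorem generic_lotka_volterra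
    (l1 l2 l3 l4 l5 l6 : PowerSeries ℝ)
    (v1 v3 v5 v7 : PowerSeries ℝ)
    (hv1 : v1 = l1)
    (hv3 : v3 = l5 * (l3 - l6))
    (hv5 : v5 = l2 * l4 * (l3 - l6) * (l4 + 5 * l3 - 5 * l6))
    (hv7 : v7 = l2 * l4 * (l3 - l6) ^ 2 * (l3 * l6 - 2 * l6 ^ 2 - l2 ^ 2))
    (h10 : coeff 0 l1 = 0)
    (h36 : coeff 0 l3 = coeff 0 l6)
    (h50 : coeff 0 l5 ≠ 0)
    (k : ℕ) (hk : 1 ≤ k)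
    (hvan : ∀ j < k, coeff j v1 = 0 ∧ coeff j v3 = 0) :
    coeff k v1 = coeff k l1 ∧
    coeff k v3 = coeff 0 l5 * (coeff k l3 - coeff k l6) ∧
    coeff k v5 = coeff 0 l2 * (coeff 0 l4) ^ 2 * (coeff k l3 - coeff k l6) ∧
    coeff k v7 = 0 := by
  set d := l3 - l6 with hd_def
  -- all coefficients of d below k vanish
  have hd : ∀ j < k, coeff j d = 0 := by
    intro j
    induction j using Nat.strong_induction_on with
    | _ j ih =>
      intro hj
      rcases Nat.eq_zero_or_pos j with rfl | hjpos
      · simp [hd_def, map_sub, h36]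
      · have hv : coeff j v3 = 0 := (hvan j hj).2
        rw [hv3, coeff_mul_of_lt_vanish l5 d j
          (fun m hm => ih m hm (hm.trans hj))] at hv
        exact (mul_eq_zero.mp hv).resolve_left h50
  have hdk : coeff k d = coeff k l3 - coeff k l6 := by
    simp [hd_def, map_sub]
  refine ⟨by rw [hv1], ?_, ?_, ?_⟩
  · rw [hv3, coeff_mul_of_lt_vanish l5 d k hd, hdk]
  · have h5 : v5 = (l2 * l4 * (l4 + 5 * l3 - 5 * l6)) * d := by
      rw [hv5, hd_def]; ring
    rw [h5, coeff_mul_of_lt_vanish _ d k hd, hdk]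
    have : (coeff 0) (l2 * l4 * (l4 + 5 * l3 - 5 * l6))
        = coeff 0 l2 * (coeff 0 l4) ^ 2 := by
      have h36' : constantCoeff l3 = constantCoeff l6 := by
        simpa only [coeff_zero_eq_constantCoeff] using h36
      simp only [coeff_zero_eq_constantCoeff, map_mul, map_add, map_sub,
        map_ofNat, h36']
      ring
    rw [this]
  · have h7 : v7 = (l2 * l4 * (l3 * l6 - 2 * l6 ^ 2 - l2 ^ 2)) * (d * d) := by
      rw [hv7, hd_def]; ring
    have hdd : ∀ j ≤ k, coeff j (d * d) = 0 := by
      intro j hj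
      rw [PowerSeries.coeff_mul]
      refine Finset.sum_eq_zero ?_
      rintro ⟨a, b⟩ hab
      simp only [Finset.HasAntidiagonal.mem_antidiagonal] at hab
      rcases lt_or_ge a k with ha | ha
      · simp [hd a ha]
      · have hb : b < k := by omega
        simp [hd b hb]
    rw [h7, PowerSeries.coeff_mul]
    refine Finset.sum_eq_zero ?_
    rintro ⟨a, b⟩ hab
    simp only [Finset.HasAntidiagonal.mem_antidiagonal] at hab
    have : b ≤ k := by omega
    simp [hdd b this]
end

section
/- (Generic symmetric case.) Assume λ_{1,0} = λ_{2,0} = λ_{5,0} = 0, λ_{4,0}(λ_{3,0} − λ_{6,0}) ≠ 0, and (λ_{4,0}+5λ_{3,0}−5λ_{6,0})² + (λ_{3,0}λ_{6,0}−2λ_{6,0}²)² ≠ 0. Let k ≥ 1 be an integer and suppose v̄_{1,j} = v̄_{3,j} = v̄_{5,j} = v̄_{7,j} = 0 for all 0 ≤ j ≤ k−1. Then v̄_{1,k} = λ_{1,k}, v̄_{3,k} = (λ_{3,0} − λ_{6,0}) λ_{5,k}, v̄_{5,k} = λ_{4,0}(λ_{3,0} − λ_{6,0})(λ_{4,0}+5λ_{3,0}−5λ_{6,0})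 λ_{2,k}, and v̄_{7,k} = λ_{4,0}(λ_{3,0} − λ_{6,0})²(λ_{3,0}λ_{6,0}−2λ_{6,0}²) λ_{2,k}. -/
open PowerSeries

lemma coeff_mul_of_lt_zero (f g : PowerSeries ℝ) (k : ℕ)
    (h : ∀ j < k, coeff j f = 0) :
    coeff k (f * g) = coeff k f * coeff 0 g := by
  rw [coeff_mul, Finset.sum_eq_single (k, 0)]
  · intro b hb hne
    rw [Finset.HasAntidiagonal.mem_antidiagonal] at hb
    rcases Nat.lt_or_ge b.1 k with h1 | h1
    · rw [h b.1 h1, zero_mul]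
    · exfalso; apply hne
      have hb1 : b.1 = k := by omega
      have hb2 : b.2 = 0 := by omega
      exact Prod.ext hb1 hb2
  · intro h'
    exact absurd (Finset.HasAntidiagonal.mem_antidiagonal.2 (by simp)) h'

/-- Generic symmetric case. -/
theorem generic_symmetric
    (l1 l2 l3 l4 l5 l6 : PowerSeries ℝ)
    (v1 v3 v5 v7 : PowerSeries ℝ)
    (hv1 : v1 = l1)
    (hv3 : v3 = l5 * (l3 - l6))
    (hv5 : v5 = l2 * l4 * (l3 - l6) * (l4 + 5 * l3 - 5 * l6))
    (hv7 : v7 = l2 * l4 * (l3 - l6) ^ 2 * (l3 * l6 - 2 * l6 ^ 2 - l2 ^ 2))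
    (h10 : coeff 0 l1 = 0)
    (h20 : coeff 0 l2 = 0)
    (h50 : coeff 0 l5 = 0)
    (hgen1 : coeff 0 l4 * (coeff 0 l3 - coeff 0 l6) ≠ 0)
    (hgen2 : (coeff 0 l4 + 5 * coeff 0 l3 - 5 * coeff 0 l6) ^ 2
        + (coeff 0 l3 * coeff 0 l6 - 2 * (coeff 0 l6) ^ 2) ^ 2 ≠ 0)
    (k : ℕ) (hk : 1 ≤ k)
    (hvan : ∀ j < k, coeff j v1 = 0 ∧ coeff j v3 = 0 ∧ coeff j v5 = 0 ∧ coeff j v7 = 0) :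
    coeff k v1 = coeff k l1 ∧
    coeff k v3 = (coeff 0 l3 - coeff 0 l6) * coeff k l5 ∧
    coeff k v5 = coeff 0 l4 * (coeff 0 l3 - coeff 0 l6)
      * (coeff 0 l4 + 5 * coeff 0 l3 - 5 * coeff 0 l6) * coeff k l2 ∧
    coeff k v7 = coeff 0 l4 * (coeff 0 l3 - coeff 0 l6) ^ 2
      * (coeff 0 l3 * coeff 0 l6 - 2 * (coeff 0 l6) ^ 2) * coeff k l2 := by
  have ha4 : coeff 0 l4 ≠ 0 := fun h => hgen1 (by rw [h, zero_mul])
  have ha36 : coeff 0 l3 - coeff 0 l6 ≠ 0 := fun h => hgen1 (by rw [h, mul_zero])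
  -- abbreviations for cofactors
  have hv3' : v3 = l5 * (l3 - l6) := hv3
  have hv5' : v5 = l2 * (l4 * (l3 - l6) * (l4 + 5 * l3 - 5 * l6)) := by rw [hv5]; ring
  have hv7' : v7 = l2 * (l4 * (l3 - l6) ^ 2 * (l3 * l6 - 2 * l6 ^ 2 - l2 ^ 2)) := by
    rw [hv7]; ring
  have c3 : coeff 0 (l3 - l6) = coeff 0 l3 - coeff 0 l6 := by simp
  have c5 : coeff 0 (l4 * (l3 - l6) * (l4 + 5 * l3 - 5 * l6))
      = coeff 0 l4 * (coeff 0 l3 - coeff 0 l6)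
        * (coeff 0 l4 + 5 * coeff 0 l3 - 5 * coeff 0 l6) := by
    simp [coeff_zero_eq_constantCoeff, map_mul, map_sub, map_add, map_ofNat]
  have c7 : coeff 0 (l4 * (l3 - l6) ^ 2 * (l3 * l6 - 2 * l6 ^ 2 - l2 ^ 2))
      = coeff 0 l4 * (coeff 0 l3 - coeff 0 l6) ^ 2
        * (coeff 0 l3 * coeff 0 l6 - 2 * (coeff 0 l6) ^ 2) := by
    have h20' : constantCoeff l2 = 0 := by simpa using h20
    simp [coeff_zero_eq_constantCoeff, map_mul, map_sub, map_pow, map_ofNat, h20']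
  -- l5 coefficients vanish below k
  have h5 : ∀ j < k, coeff j l5 = 0 := by
    intro j hj
    induction j using Nat.strong_induction_on with
    | _ j ih =>
      have hcm := coeff_mul_of_lt_zero l5 (l3 - l6) j (fun i hi => ih i hi (hi.trans hj))
      have := (hvan j hj).2.1
      rw [hv3', hcm, c3] at this
      exact (mul_eq_zero.1 this).resolve_right ha36
  -- l2 coefficients vanish below k
  have h2 : ∀ j < k, coeff j l2 = 0 := by
    have hAB : (coeff 0 l4 + 5 * coeff 0 l3 - 5 * coeff 0 l6) ≠ 0 ∨
        (coeff 0 l3 * coeff 0 l6 - 2 * (coeff 0 l6) ^ 2) ≠ 0 := by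
      by_contra h
      push_neg at h
      exact hgen2 (by rw [h.1, h.2]; ring)
    intro j hj
    induction j using Nat.strong_induction_on with
    | _ j ih =>
      rcases hAB with hA | hB
      · have hcm := coeff_mul_of_lt_zero l2 (l4 * (l3 - l6) * (l4 + 5 * l3 - 5 * l6)) j
          (fun i hi => ih i hi (hi.trans hj))
        have := (hvan j hj).2.2.1
        rw [hv5', hcm, c5] at this
        rcases mul_eq_zero.1 this with h | h
        · exact h
        · exact absurd h (by
            exact mul_ne_zero (mul_ne_zero ha4 ha36) hA)
      · have hcm := coeff_mul_of_lt_zero l2 (l4 * (l3 - l6) ^ 2 * (l3 * l6 - 2 * l6 ^ 2 - l2 ^ 2)) j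
          (fun i hi => ih i hi (hi.trans hj))
        have := (hvan j hj).2.2.2
        rw [hv7', hcm, c7] at this
        rcases mul_eq_zero.1 this with h | h
        · exact h
        · exact absurd h (by
            exact mul_ne_zero (mul_ne_zero ha4 (pow_ne_zero 2 ha36)) hB)
  refine ⟨by rw [hv1], ?_, ?_, ?_⟩
  · rw [hv3', coeff_mul_of_lt_zero l5 _ k h5, c3, mul_comm]
  · rw [hv5', coeff_mul_of_lt_zero l2 _ k h2, c5, mul_comm]
  · rw [hv7', coeff_mul_of_lt_zero l2 _ k h2, c7, mul_comm]
end

section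
/- (Generic Hamiltonian case.) Assume λ_{1,0} = λ_{4,0} = λ_{5,0} = 0 and λ_{2,0}(λ_{3,0} − λ_{6,0}) ≠ 0. Let k ≥ 1 be an integer and suppose v̄_{1,j} = v̄_{3,j} = v̄_{5,j} = 0 for all 0 ≤ j ≤ k−1. Then v̄_{1,k} = λ_{1,k}, v̄_{3,k} = (λ_{3,0} − λ_{6,0}) λ_{5,k}, v̄_{5,k} = 5 λ_{2,0}(λ_{3,0} − λ_{6,0})² λ_{4,k}, and v̄_{7,k} = λ_{2,0}(λ_{3,0} − λ_{6,0})²(λ_{3,0}λ_{6,0}−2λ_{6,0}²−λ_{2,0}²) λ_{4,k}. -/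
open PowerSeries

lemma coeff_mul_left_vanish (a b : PowerSeries ℝ) (n : ℕ)
    (h : ∀ i < n, coeff i a = 0) :
    coeff n (a * b) = coeff n a * coeff 0 b := by
  rw [coeff_mul]
  rw [Finset.sum_eq_single_of_mem (n, 0) (by simp)]
  intro p hp hne
  rcases Finset.HasAntidiagonal.mem_antidiagonal.mp hp with rfl
  have : p.1 < p.1 + p.2 := by
    rcases Nat.eq_zero_or_pos p.2 with h2 | h2
    · exact absurd (by simp [Prod.ext_iff, h2]) hne
    · omega
  rw [h p.1 this, zero_mul]

/-- Generic Hamiltonian case. -/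
theorem generic_hamiltonian
    (l1 l2 l3 l4 l5 l6 : PowerSeries ℝ)
    (v1 v3 v5 v7 : PowerSeries ℝ)
    (hv1 : v1 = l1)
    (hv3 : v3 = l5 * (l3 - l6))
    (hv5 : v5 = l2 * l4 * (l3 - l6) * (l4 + 5 * l3 - 5 * l6))
    (hv7 : v7 = l2 * l4 * (l3 - l6) ^ 2 * (l3 * l6 - 2 * l6 ^ 2 - l2 ^ 2))
    (h10 : coeff 0 l1 = 0)
    (h40 : coeff 0 l4 = 0)
    (h50 : coeff 0 l5 = 0)
    (hgen : coeff 0 l2 * (coeff 0 l3 - coeff 0 l6) ≠ 0)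
    (k : ℕ) (hk : 1 ≤ k)
    (hvan : ∀ j < k, coeff j v1 = 0 ∧ coeff j v3 = 0 ∧ coeff j v5 = 0) :
    coeff k v1 = coeff k l1 ∧
    coeff k v3 = (coeff 0 l3 - coeff 0 l6) * coeff k l5 ∧
    coeff k v5 = 5 * coeff 0 l2 * (coeff 0 l3 - coeff 0 l6) ^ 2 * coeff k l4 ∧
    coeff k v7 = coeff 0 l2 * (coeff 0 l3 - coeff 0 l6) ^ 2
      * (coeff 0 l3 * coeff 0 l6 - 2 * (coeff 0 l6) ^ 2 - (coeff 0 l2) ^ 2) * coeff k l4 := by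
  have hc2 : coeff 0 l2 ≠ 0 := left_ne_zero_of_mul hgen
  have hdne : coeff 0 l3 - coeff 0 l6 ≠ 0 := right_ne_zero_of_mul hgen
  have hd0 : coeff 0 (l3 - l6) = coeff 0 l3 - coeff 0 l6 := by simp
  have h5 : ∀ j, j < k → coeff j l5 = 0 := by
    intro j
    induction j using Nat.strong_induction_on with
    | _ j ih =>
      intro hj
      have hv := (hvan j hj).2.1
      rw [hv3, coeff_mul_left_vanish _ _ _ (fun i hi => ih i hi (hi.trans hj)), hd0] at hv
      exact (mul_eq_zero.mp hv).resolve_right hdne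
  set g := l2 * (l3 - l6) * (l4 + 5 * l3 - 5 * l6) with hg
  have hv5' : v5 = l4 * g := by rw [hv5, hg]; ring
  have hg0 : coeff 0 g = coeff 0 l2 * (coeff 0 l3 - coeff 0 l6)
      * (5 * (coeff 0 l3 - coeff 0 l6)) := by
    have h40' : constantCoeff l4 = 0 := by simpa using h40
    simp [hg, coeff_zero_eq_constantCoeff, map_ofNat, h40']
    exact Or.inl (by ring)
  have hg0ne : coeff 0 g ≠ 0 := by
    rw [hg0]
    exact mul_ne_zero (mul_ne_zero hc2 hdne) (mul_ne_zero (by norm_num) hdne)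
  have h4 : ∀ j, j < k → coeff j l4 = 0 := by
    intro j
    induction j using Nat.strong_induction_on with
    | _ j ih =>
      intro hj
      have hv := (hvan j hj).2.2
      rw [hv5', coeff_mul_left_vanish _ _ _ (fun i hi => ih i hi (hi.trans hj))] at hv
      exact (mul_eq_zero.mp hv).resolve_right hg0ne
  set h := l2 * (l3 - l6) ^ 2 * (l3 * l6 - 2 * l6 ^ 2 - l2 ^ 2) with hh
  have hv7' : v7 = l4 * h := by rw [hv7, hh]; ring
  refine ⟨by rw [hv1], ?_, ?_, ?_⟩
  · rw [hv3, coeff_mul_left_vanish _ _ _ h5, hd0, mul_comm]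
  · rw [hv5', coeff_mul_left_vanish _ _ _ h4, hg0]
    ring
  · rw [hv7', coeff_mul_left_vanish _ _ _ h4]
    have : coeff 0 h = coeff 0 l2 * (coeff 0 l3 - coeff 0 l6) ^ 2
        * (coeff 0 l3 * coeff 0 l6 - 2 * (coeff 0 l6) ^ 2 - (coeff 0 l2) ^ 2) := by
      simp [hh, coeff_zero_eq_constantCoeff, map_ofNat]

    rw [this]
    ring
end

section
/- (Generic Darboux case.) Assume λ_{1,0} = λ_{5,0} = 0, λ_{4,0}+5λ_{3,0}−5λ_{6,0} = 0, λ_{3,0}λ_{6,0}−2λ_{6,0}²−λ_{2,0}² = 0, and λ_{2,0}λ_{4,0}(λ_{3,0} − λ_{6,0}) ≠ 0. Then v̄_{1,1} = λ_{1,1}, v̄_{3,1} = (λ_{3,0} − λ_{6,0}) λ_{5,1}, v̄_{5,1} = λ_{2,0}λ_{4,0}(λ_{3,0} − λ_{6,0})(λ_{4,1}+5λ_{3,1}−5λ_{6,1}), and v̄_{7,1} = λ_{2,0}λ_{4,0}(λ_{3,0} − λ_{6,0})²(λ_{3,0}λ_{6,1}+λ_{6,0}λ_{3,1}−4λ_{6,0}λ_{6,1}−2λ_{2,0}λ_{2,1}).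 -/
open PowerSeries

/-- Generic Darboux case. -/
theorem generic_darboux
    (l1 l2 l3 l4 l5 l6 : PowerSeries ℝ)
    (v1 v3 v5 v7 : PowerSeries ℝ)
    (hv1 : v1 = l1)
    (hv3 : v3 = l5 * (l3 - l6))
    (hv5 : v5 = l2 * l4 * (l3 - l6) * (l4 + 5 * l3 - 5 * l6))
    (hv7 : v7 = l2 * l4 * (l3 - l6) ^ 2 * (l3 * l6 - 2 * l6 ^ 2 - l2 ^ 2))
    (h10 : coeff 0 l1 = 0)
    (h50 : coeff 0 l5 = 0)
    (hD1 : coeff 0 l4 + 5 * coeff 0 l3 - 5 * coeff 0 l6 = 0)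
    (hD2 : coeff 0 l3 * coeff 0 l6 - 2 * (coeff 0 l6) ^ 2 - (coeff 0 l2) ^ 2 = 0)
    (hgen : coeff 0 l2 * coeff 0 l4 * (coeff 0 l3 - coeff 0 l6) ≠ 0) :
    coeff 1 v1 = coeff 1 l1 ∧
    coeff 1 v3 = (coeff 0 l3 - coeff 0 l6) * coeff 1 l5 ∧
    coeff 1 v5 = coeff 0 l2 * coeff 0 l4 * (coeff 0 l3 - coeff 0 l6)
      * (coeff 1 l4 + 5 * coeff 1 l3 - 5 * coeff 1 l6) ∧
    coeff 1 v7 = coeff 0 l2 * coeff 0 l4 * (coeff 0 l3 - coeff 0 l6) ^ 2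
      * (coeff 0 l3 * coeff 1 l6 + coeff 0 l6 * coeff 1 l3
        - 4 * coeff 0 l6 * coeff 1 l6 - 2 * coeff 0 l2 * coeff 1 l2) := by
  subst hv1 hv3 hv5 hv7
  simp only [coeff_zero_eq_constantCoeff] at *
  set a2 := constantCoeff l2
  set a3 := constantCoeff l3
  set a4 := constantCoeff l4
  set a6 := constantCoeff l6
  set b2 := coeff 1 l2
  set b3 := coeff 1 l3
  set b4 := coeff 1 l4
  set b6 := coeff 1 l6
  have h5 : coeff 1 (5 : PowerSeries ℝ) = 0 := by
    rw [← map_ofNat C 5, coeff_C]; simp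
  have h2 : coeff 1 (2 : PowerSeries ℝ) = 0 := by
    rw [← map_ofNat C 2, coeff_C]; simp
  refine ⟨by trivial, ?_, ?_, ?_⟩ <;>
    simp only [pow_two, coeff_one_mul, map_mul, map_sub, map_add, map_ofNat, h5, h2] <;>
    ring_nf
  · linear_combination (b3 - b6) * h50
  · linear_combination (b2 * a4 * (a3 - a6) + a2 * b4 * (a3 - a6) + a2 * a4 * (b3 - b6)) * hD1
  · linear_combination (b2 * a4 * (a3 - a6) ^ 2 + a2 * b4 * (a3 - a6) ^ 2
      + 2 * a2 * a4 * (a3 - a6) * (b3 - b6)) * hD2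
end

section
/- (Symmetric Lotka–Volterra case.) Assume λ_{1,0} = λ_{2,0} = λ_{5,0} = 0, λ_{3,0} = λ_{6,0} and λ_{4,0} ≠ 0. Then v̄_{1,1} = λ_{1,1} and v̄_{3,1} = v̄_{5,1} = v̄_{7,1} = 0. If moreover λ_{1,1} = 0, then v̄_{1,2} = λ_{1,2}, v̄_{3,2} = (λ_{3,1} − λ_{6,1}) λ_{5,1}, v̄_{5,2} = λ_{4,0}² λ_{2,1}(λ_{3,1} − λ_{6,1}), and v̄_{7,2} = 0. Furthermore, for every integer k ≥ 2, if v̄_{5,j} = 0 for all 0 ≤ j ≤ k−1 then v̄_{7,k} = 0. -/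
open PowerSeries

lemma coeff_mul_one' (f g : PowerSeries ℝ) :
    coeff 1 (f * g) = coeff 0 f * coeff 1 g + coeff 1 f * coeff 0 g := by
  rw [coeff_mul, Finset.Nat.sum_antidiagonal_eq_sum_range_succ_mk]
  simp [Finset.sum_range_succ]

lemma coeff_mul_two' (f g : PowerSeries ℝ) :
    coeff 2 (f * g) = coeff 0 f * coeff 2 g + coeff 1 f * coeff 1 g
      + coeff 2 f * coeff 0 g := by
  rw [coeff_mul, Finset.Nat.sum_antidiagonal_eq_sum_range_succ_mk]
  simp [Finset.sum_range_succ]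

/-- Symmetric Lotka–Volterra case. -/
theorem symmetric_lotka_volterra
    (l1 l2 l3 l4 l5 l6 : PowerSeries ℝ)
    (v1 v3 v5 v7 : PowerSeries ℝ)
    (hv1 : v1 = l1)
    (hv3 : v3 = l5 * (l3 - l6))
    (hv5 : v5 = l2 * l4 * (l3 - l6) * (l4 + 5 * l3 - 5 * l6))
    (hv7 : v7 = l2 * l4 * (l3 - l6) ^ 2 * (l3 * l6 - 2 * l6 ^ 2 - l2 ^ 2))
    (h10 : coeff 0 l1 = 0)
    (h20 : coeff 0 l2 = 0)
    (h50 : coeff 0 l5 = 0)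
    (h36 : coeff 0 l3 = coeff 0 l6)
    (h40 : coeff 0 l4 ≠ 0) :
    coeff 1 v1 = coeff 1 l1 ∧ coeff 1 v3 = 0 ∧ coeff 1 v5 = 0 ∧ coeff 1 v7 = 0 ∧
    (coeff 1 l1 = 0 →
      coeff 2 v1 = coeff 2 l1 ∧
      coeff 2 v3 = (coeff 1 l3 - coeff 1 l6) * coeff 1 l5 ∧
      coeff 2 v5 = (coeff 0 l4) ^ 2 * coeff 1 l2 * (coeff 1 l3 - coeff 1 l6) ∧
      coeff 2 v7 = 0) ∧
    (∀ k : ℕ, 2 ≤ k → (∀ j < k, coeff j v5 = 0) → coeff k v7 = 0) := by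
  set a := l3 - l6 with ha
  have ha0 : coeff 0 a = 0 := by rw [ha, map_sub, h36, sub_self]
  set m := l2 * a with hm
  have hm0 : coeff 0 m = 0 := by
    rw [hm, coeff_zero_eq_constantCoeff, map_mul]
    simp [← coeff_zero_eq_constantCoeff, h20]
  have hm1 : coeff 1 m = 0 := by
    rw [hm, coeff_mul_one', h20, ha0] ; ring
  have hm2 : coeff 2 m = coeff 1 l2 * coeff 1 a := by
    rw [hm, coeff_mul_two', h20, ha0] ; ring
  set g := l4 * (l4 + 5 * l3 - 5 * l6) with hg
  have hg0 : coeff 0 g = (coeff 0 l4) ^ 2 := by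
    simp only [hg, coeff_zero_eq_constantCoeff, map_mul, map_add, map_sub, map_ofNat]
    have h36' : constantCoeff l3 = constantCoeff l6 := by
      simpa [coeff_zero_eq_constantCoeff] using h36
    rw [h36'] ; ring
  have hv5' : v5 = m * g := by rw [hv5, hm, hg, ha] ; ring
  set h := a * (l4 * (l3 * l6 - 2 * l6 ^ 2 - l2 ^ 2)) with hh
  have hh0 : coeff 0 h = 0 := by
    rw [hh, coeff_zero_eq_constantCoeff, map_mul]
    simp [← coeff_zero_eq_constantCoeff, ha0]
  have hv7' : v7 = m * h := by rw [hv7, hm, hh, ha] ; ring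
  refine ⟨by rw [hv1], ?_, ?_, ?_, ?_, ?_⟩
  · rw [hv3, coeff_mul_one', h50, ha0] ; ring
  · rw [hv5', coeff_mul_one', hm0, hm1] ; ring
  · rw [hv7', coeff_mul_one', hm0, hm1] ; ring
  · intro _
    refine ⟨by rw [hv1], ?_, ?_, ?_⟩
    · rw [hv3, coeff_mul_two', h50, ha0]
      simp [ha, map_sub] ; ring
    · rw [hv5', coeff_mul_two', hm0, hm1, hm2, hg0]
      simp [ha, map_sub] ; ring
    · rw [hv7', coeff_mul_two', hm0, hm1, hh0] ; ring
  · intro k hk hj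
    have hmj : ∀ j, j < k → coeff j m = 0 := by
      intro j
      induction j using Nat.strong_induction_on with
      | _ j ih =>
        intro hjk
        have h5j := hj j hjk
        rw [hv5', coeff_mul, Finset.Nat.sum_antidiagonal_eq_sum_range_succ_mk,
          Finset.sum_range_succ] at h5j
        have hz : ∑ i ∈ Finset.range j, coeff i m * coeff (j - i) g = 0 :=
          Finset.sum_eq_zero fun i hi => by
            rw [ih i (Finset.mem_range.mp hi) (lt_trans (Finset.mem_range.mp hi) hjk), zero_mul]
        rw [hz, zero_add, Nat.sub_self] at h5j
        have : (coeff 0 g) ≠ 0 := by rw [hg0] ; exact pow_ne_zero 2 h40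
        exact (mul_eq_zero.mp h5j).resolve_right this
    rw [hv7', coeff_mul]
    refine Finset.sum_eq_zero fun p hp => ?_
    have hpk : p.1 + p.2 = k := Finset.HasAntidiagonal.mem_antidiagonal.mp hp
    by_cases h2 : p.2 = 0
    · rw [h2, hh0, mul_zero]
    · have : p.1 < k := by omega
      rw [hmj p.1 this, zero_mul]
end

section
/- (Symmetric Darboux case.) Assume λ_{1,0} = λ_{2,0} = λ_{5,0} = 0, λ_{4,0}+5λ_{3,0}−5λ_{6,0} = 0, λ_{3,0}λ_{6,0}−2λ_{6,0}² = 0, and λ_{4,0} ≠ 0. Then λ_{3,0} ≠ λ_{6,0} and λ_{3,0} ≠ 0; moreover v̄_{1,1} = λ_{1,1}, v̄_{3,1} = (λ_{3,0} − λ_{6,0}) λ_{5,1}, and v̄_{5,1} = v̄_{7,1} = 0. If in addition λ_{1,1} = λ_{5,1} = 0, then v̄_{1,2} = λ_{1,2}, v̄_{3,2} = (λ_{3,0} − λ_{6,0}) λ_{5,2}, v̄_{5,2} = λ_{4,0}(λ_{3,0} − λ_{6,0}) λ_{2,1}(λ_{4,1}+5λ_{3,1}−5λ_{6,1}), and v̄_{7,2}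 = λ_{4,0}(λ_{3,0} − λ_{6,0})² λ_{2,1}(λ_{3,0}λ_{6,1}+λ_{6,0}λ_{3,1}−4λ_{6,0}λ_{6,1}). -/
open PowerSeries

private lemma c0mul (A B : PowerSeries ℝ) :
    coeff 0 (A * B) = coeff 0 A * coeff 0 B := by
  simp [coeff_zero_eq_constantCoeff]

private lemma c1mul (A B : PowerSeries ℝ) :
    coeff 1 (A * B) = coeff 0 A * coeff 1 B + coeff 1 A * coeff 0 B := by
  rw [coeff_mul, Finset.Nat.sum_antidiagonal_eq_sum_range_succ_mk]
  simp [Finset.sum_range_succ]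

private lemma c2mul (A B : PowerSeries ℝ) :
    coeff 2 (A * B) = coeff 0 A * coeff 2 B + coeff 1 A * coeff 1 B
      + coeff 2 A * coeff 0 B := by
  rw [coeff_mul, Finset.Nat.sum_antidiagonal_eq_sum_range_succ_mk]
  simp [Finset.sum_range_succ]

private lemma c0two : coeff 0 (2:ℝ⟦X⟧) = 2 := by
  rw [coeff_zero_eq_constantCoeff_apply]; exact map_ofNat _ 2
private lemma c0five : coeff 0 (5:ℝ⟦X⟧) = 5 := by
  rw [coeff_zero_eq_constantCoeff_apply]; exact map_ofNat _ 5
private lemma c1two : coeff 1 (2:ℝ⟦X⟧) = 0 := by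
  rw [← map_ofNat (C (R := ℝ)) 2, coeff_C]; simp
private lemma c1five : coeff 1 (5:ℝ⟦X⟧) = 0 := by
  rw [← map_ofNat (C (R := ℝ)) 5, coeff_C]; simp
private lemma c2two : coeff 2 (2:ℝ⟦X⟧) = 0 := by
  rw [← map_ofNat (C (R := ℝ)) 2, coeff_C]; simp
private lemma c2five : coeff 2 (5:ℝ⟦X⟧) = 0 := by
  rw [← map_ofNat (C (R := ℝ)) 5, coeff_C]; simp

/-- Symmetric Darboux case. -/
theorem symmetric_darboux
    (l1 l2 l3 l4 l5 l6 : PowerSeries ℝ)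
    (v1 v3 v5 v7 : PowerSeries ℝ)
    (hv1 : v1 = l1)
    (hv3 : v3 = l5 * (l3 - l6))
    (hv5 : v5 = l2 * l4 * (l3 - l6) * (l4 + 5 * l3 - 5 * l6))
    (hv7 : v7 = l2 * l4 * (l3 - l6) ^ 2 * (l3 * l6 - 2 * l6 ^ 2 - l2 ^ 2))
    (h10 : coeff 0 l1 = 0)
    (h20 : coeff 0 l2 = 0)
    (h50 : coeff 0 l5 = 0)
    (hD1 : coeff 0 l4 + 5 * coeff 0 l3 - 5 * coeff 0 l6 = 0)
    (hD2 : coeff 0 l3 * coeff 0 l6 - 2 * (coeff 0 l6) ^ 2 = 0)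
    (h40 : coeff 0 l4 ≠ 0) :
    coeff 0 l3 ≠ coeff 0 l6 ∧ coeff 0 l3 ≠ 0 ∧
    coeff 1 v1 = coeff 1 l1 ∧
    coeff 1 v3 = (coeff 0 l3 - coeff 0 l6) * coeff 1 l5 ∧
    coeff 1 v5 = 0 ∧ coeff 1 v7 = 0 ∧
    (coeff 1 l1 = 0 → coeff 1 l5 = 0 →
      coeff 2 v1 = coeff 2 l1 ∧
      coeff 2 v3 = (coeff 0 l3 - coeff 0 l6) * coeff 2 l5 ∧
      coeff 2 v5 = coeff 0 l4 * (coeff 0 l3 - coeff 0 l6) * coeff 1 l2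
        * (coeff 1 l4 + 5 * coeff 1 l3 - 5 * coeff 1 l6) ∧
      coeff 2 v7 = coeff 0 l4 * (coeff 0 l3 - coeff 0 l6) ^ 2 * coeff 1 l2
        * (coeff 0 l3 * coeff 1 l6 + coeff 0 l6 * coeff 1 l3 - 4 * coeff 0 l6 * coeff 1 l6)) := by
  subst hv1 hv3 hv5 hv7
  have hne : coeff 0 l3 ≠ coeff 0 l6 := by
    intro h; apply h40; linarith [hD1, h]
  have h3 : coeff 0 l3 ≠ 0 := by
    intro h
    have h6 : coeff 0 l6 = 0 := by nlinarith [hD2]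
    exact hne (by rw [h, h6])
  set a := coeff 0 l3
  set b := coeff 0 l6
  set c := coeff 0 l4
  refine ⟨hne, h3, rfl, ?_, ?_, ?_, fun h11 h51 => ⟨rfl, ?_, ?_, ?_⟩⟩
  · simp only [c1mul, map_sub, h50]; ring
  · simp only [pow_two, c1mul, c0mul, map_sub, map_add, c0two, c0five, c1two, c1five, h20]
    linear_combination (c * (a - b) * coeff 1 l2) * hD1
  · simp only [pow_two, c1mul, c0mul, map_sub, map_add, c0two, c0five, c1two, c1five, h20]
    linear_combination (c * (a - b) ^ 2 * coeff 1 l2) * hD2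
  · simp only [c2mul, c1mul, map_sub, h50, h51]; ring
  · simp only [pow_two, c2mul, c1mul, c0mul, map_sub, map_add, c0two, c0five,
      c1two, c1five, c2two, c2five, h20]
    linear_combination ((coeff 1 l2) * (c * (coeff 1 l3 - coeff 1 l6)
      + coeff 1 l4 * (a - b)) + coeff 2 l2 * c * (a - b)) * hD1
  · simp only [pow_two, c2mul, c1mul, c0mul, map_sub, map_add, c0two, c0five,
      c1two, c1five, c2two, c2five, h20]
    linear_combination ((coeff 1 l2) * ((coeff 1 l4) * (a - b) ^ 2
      + c * 2 * (a - b) * (coeff 1 l3 - coeff 1 l6)) + coeff 2 l2 * c * (a - b) ^ 2) * hD2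
end

section
/- (Hamiltonian Lotka–Volterra case, orders 1 to 3.) Assume λ_{1,0} = λ_{4,0} = λ_{5,0} = 0, λ_{3,0} = λ_{6,0} and λ_{2,0} ≠ 0. Then v̄_{1,1} = λ_{1,1} and v̄_{3,1} = v̄_{5,1} = v̄_{7,1} = 0. If moreover λ_{1,1} = 0, then v̄_{1,2} = λ_{1,2}, v̄_{3,2} = (λ_{3,1} − λ_{6,1}) λ_{5,1}, and v̄_{5,2} = v̄_{7,2} = 0. If in addition λ_{3,1} ≠ λ_{6,1} and λ_{1,2} = λ_{5,1} = 0, then v̄_{1,3} = λ_{1,3}, v̄_{3,3} = (λ_{3,1} − λ_{6,1}) λ_{5,2}, v̄_{5,3} = λ_{2,0}(λ_{3,1} − λ_{6,1})(λ_{4,1}+5λ_{3,1}−5λ_{6,1}) λ_{4,1}, and v̄_{7,3} = −λ_{2,0}(λ_{6,0}² + λ_{2,0}²)(λ_{3,1} − λ_{6,1})² λ_{4,1}. -/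
set_option maxHeartbeats 1000000


open PowerSeries

/-- Hamiltonian Lotka–Volterra case, orders 1 to 3. -/
theorem hamiltonian_lotka_volterra_low_order
    (l1 l2 l3 l4 l5 l6 : PowerSeries ℝ)
    (v1 v3 v5 v7 : PowerSeries ℝ)
    (hv1 : v1 = l1)
    (hv3 : v3 = l5 * (l3 - l6))
    (hv5 : v5 = l2 * l4 * (l3 - l6) * (l4 + 5 * l3 - 5 * l6))
    (hv7 : v7 = l2 * l4 * (l3 - l6) ^ 2 * (l3 * l6 - 2 * l6 ^ 2 - l2 ^ 2))
    (h10 : coeff 0 l1 = 0)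
    (h40 : coeff 0 l4 = 0)
    (h50 : coeff 0 l5 = 0)
    (h36 : coeff 0 l3 = coeff 0 l6)
    (h20 : coeff 0 l2 ≠ 0) :
    coeff 1 v1 = coeff 1 l1 ∧ coeff 1 v3 = 0 ∧ coeff 1 v5 = 0 ∧ coeff 1 v7 = 0 ∧
    (coeff 1 l1 = 0 →
      coeff 2 v1 = coeff 2 l1 ∧
      coeff 2 v3 = (coeff 1 l3 - coeff 1 l6) * coeff 1 l5 ∧
      coeff 2 v5 = 0 ∧ coeff 2 v7 = 0) ∧
    (coeff 1 l1 = 0 → coeff 1 l3 ≠ coeff 1 l6 → coeff 2 l1 = 0 → coeff 1 l5 = 0 →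
      coeff 3 v1 = coeff 3 l1 ∧
      coeff 3 v3 = (coeff 1 l3 - coeff 1 l6) * coeff 2 l5 ∧
      coeff 3 v5 = coeff 0 l2 * (coeff 1 l3 - coeff 1 l6)
        * (coeff 1 l4 + 5 * coeff 1 l3 - 5 * coeff 1 l6) * coeff 1 l4 ∧
      coeff 3 v7 = -(coeff 0 l2 * ((coeff 0 l6) ^ 2 + (coeff 0 l2) ^ 2)
        * (coeff 1 l3 - coeff 1 l6) ^ 2 * coeff 1 l4)) := by
  subst hv1 hv3 hv5 hv7
  simp only [coeff_zero_eq_constantCoeff] at h10 h40 h50 h36 ⊢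
  refine ⟨?_, ?_, ?_, ?_, fun h11 => ⟨?_, ?_, ?_, ?_⟩,
    fun h11 h36' h12 h51 => ⟨?_, ?_, ?_, ?_⟩⟩ <;>
  · simp [pow_two, coeff_mul,
      Finset.Nat.sum_antidiagonal_eq_sum_range_succ_mk, Finset.sum_range_succ,
      h40, h50, h36, map_ofNat, *]
    try ring
end

section
/- (Hamiltonian Lotka–Volterra case, orders 4 and 5.) Assume λ_{1,0} = λ_{4,0} = λ_{5,0} = 0, λ_{3,0} = λ_{6,0} and λ_{2,0} ≠ 0. (a) If λ_{3,1} ≠ λ_{6,1}, λ_{1,1} = λ_{1,2} = λ_{1,3} = 0, λ_{5,1} = λ_{5,2} = 0, and λ_{4,1} = 0, then v̄_{1,4} = λ_{1,4}, v̄_{3,4} = (λ_{3,1} − λ_{6,1}) λ_{5,3}, v̄_{5,4} = 5 λ_{2,0}(λ_{3,1} − λ_{6,1})² λ_{4,2}, and v̄_{7,4} = −λ_{2,0}(λ_{6,0}² + λ_{2,0}²)(λ_{3,1} − λ_{6,1})² λ_{4,2}. (b) If instead λ_{1,1} = λ_{1,2} = λ_{1,3} = λ_{1,4} = 0, λ_{5,1}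 = 0, λ_{3,1} = λ_{6,1} and λ_{3,2} = λ_{6,2}, then v̄_{1,j} = v̄_{3,j} = v̄_{5,j} = v̄_{7,j} = 0 for all 1 ≤ j ≤ 4, and v̄_{1,5} = λ_{1,5}, v̄_{3,5} = (λ_{3,3} − λ_{6,3}) λ_{5,2}, v̄_{5,5} = λ_{2,0} λ_{4,1}² (λ_{3,3} − λ_{6,3}), v̄_{7,5} = 0. -/
open PowerSeries

set_option maxHeartbeats 2000000 in
/-- Hamiltonian Lotka–Volterra case, orders 4 and 5. -/
theorem hamiltonian_lotka_volterra_high_order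
    (l1 l2 l3 l4 l5 l6 : PowerSeries ℝ)
    (v1 v3 v5 v7 : PowerSeries ℝ)
    (hv1 : v1 = l1)
    (hv3 : v3 = l5 * (l3 - l6))
    (hv5 : v5 = l2 * l4 * (l3 - l6) * (l4 + 5 * l3 - 5 * l6))
    (hv7 : v7 = l2 * l4 * (l3 - l6) ^ 2 * (l3 * l6 - 2 * l6 ^ 2 - l2 ^ 2))
    (h10 : coeff 0 l1 = 0)
    (h40 : coeff 0 l4 = 0)
    (h50 : coeff 0 l5 = 0)
    (h36 : coeff 0 l3 = coeff 0 l6)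
    (h20 : coeff 0 l2 ≠ 0) :
    (coeff 1 l3 ≠ coeff 1 l6 → coeff 1 l1 = 0 → coeff 2 l1 = 0 → coeff 3 l1 = 0 →
      coeff 1 l5 = 0 → coeff 2 l5 = 0 → coeff 1 l4 = 0 →
      coeff 4 v1 = coeff 4 l1 ∧
      coeff 4 v3 = (coeff 1 l3 - coeff 1 l6) * coeff 3 l5 ∧
      coeff 4 v5 = 5 * coeff 0 l2 * (coeff 1 l3 - coeff 1 l6) ^ 2 * coeff 2 l4 ∧
      coeff 4 v7 = -(coeff 0 l2 * ((coeff 0 l6) ^ 2 + (coeff 0 l2) ^ 2)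
        * (coeff 1 l3 - coeff 1 l6) ^ 2 * coeff 2 l4)) ∧
    (coeff 1 l1 = 0 → coeff 2 l1 = 0 → coeff 3 l1 = 0 → coeff 4 l1 = 0 →
      coeff 1 l5 = 0 → coeff 1 l3 = coeff 1 l6 → coeff 2 l3 = coeff 2 l6 →
      (∀ j : ℕ, 1 ≤ j → j ≤ 4 →
        coeff j v1 = 0 ∧ coeff j v3 = 0 ∧ coeff j v5 = 0 ∧ coeff j v7 = 0) ∧
      coeff 5 v1 = coeff 5 l1 ∧
      coeff 5 v3 = (coeff 3 l3 - coeff 3 l6) * coeff 2 l5 ∧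
      coeff 5 v5 = coeff 0 l2 * (coeff 1 l4) ^ 2 * (coeff 3 l3 - coeff 3 l6) ∧
      coeff 5 v7 = 0) := by
  subst hv1 hv3 hv5 hv7
  constructor
  · intro hne h11 h12 h13 h51 h52 h41
    refine ⟨rfl, ?_, ?_, ?_⟩ <;>
    · try simp only [pow_two]
      simp [coeff_mul, Finset.Nat.sum_antidiagonal_eq_sum_range_succ_mk,
        Finset.sum_range_succ, h40, h50, h36, h51, h52, h41]
      try simp only [map_ofNat]
      try ring
  · intro h11 h12 h13 h14 h51 h361 h362
    refine ⟨?_, rfl, ?_, ?_, ?_⟩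
    · intro j hj1 hj4
      interval_cases j <;>
      refine ⟨by assumption, ?_, ?_, ?_⟩ <;>
      · try simp only [pow_two]
        simp [coeff_mul, Finset.Nat.sum_antidiagonal_eq_sum_range_succ_mk,
          Finset.sum_range_succ, h40, h50, h36, h51, h361, h362]
        try simp only [map_ofNat]
        try ring
    all_goals
    · try simp only [pow_two]
      simp [coeff_mul, Finset.Nat.sum_antidiagonal_eq_sum_range_succ_mk,
        Finset.sum_range_succ, h40, h50, h36, h51, h361, h362]
      try simp only [map_ofNat]
      try ring
end

section
/- (Hamiltonian triangle case.) Assume λ_{1,0} = λ_{2,0} = λ_{4,0} = λ_{5,0} = 0, λ_{3,0} = λ_{6,0} and λ_{6,0} ≠ 0. Then v̄_{3,1} = v̄_{5,1} = v̄_{7,1} = 0, v̄_{3,2} = (λ_{3,1} − λ_{6,1}) λ_{5,1}, v̄_{5,2} = v̄_{7,2} = 0, and v̄_{5,3} = v̄_{7,3} = 0. (a) If λ_{3,1} ≠ λ_{6,1}, λ_{1,1} = λ_{1,2} = λ_{1,3} = 0 and λ_{5,1} = λ_{5,2} = 0, then v̄_{1,4} = λ_{1,4}, v̄_{3,4} =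 (λ_{3,1} − λ_{6,1}) λ_{5,3}, v̄_{5,4} = λ_{2,1} λ_{4,1}(λ_{3,1} − λ_{6,1})(λ_{4,1}+5λ_{3,1}−5λ_{6,1}), and v̄_{7,4} = −λ_{6,0}² λ_{2,1} λ_{4,1}(λ_{3,1} − λ_{6,1})². (b) If instead λ_{3,1} = λ_{6,1}, λ_{5,1} = λ_{5,2} = 0 and λ_{1,j} = 0 for 1 ≤ j ≤ 4, then v̄_{1,j} = v̄_{3,j} = v̄_{5,j} = v̄_{7,j} = 0 for all 1 ≤ j ≤ 4, and v̄_{1,5} = λ_{1,5}, v̄_{3,5} = (λ_{3,2} − λ_{6,2}) λ_{5,3}, v̄_{5,5} = λ_{2,1} λ_{4,1}² (λ_{3,2} − λ_{6,2}), v̄_{7,5} = 0. -/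
open PowerSeries
set_option maxHeartbeats 4000000

lemma cm_aux (a b : PowerSeries ℝ) (n : ℕ) :
    coeff n (a*b) = ∑ i ∈ Finset.range (n+1), coeff i a * coeff (n-i) b := by
  rw [coeff_mul, Finset.Nat.sum_antidiagonal_eq_sum_range_succ_mk]

lemma c5_aux : (5 : PowerSeries ℝ) = C 5 := by simp [← map_ofNat C 5]
lemma c2_aux : (2 : PowerSeries ℝ) = C 2 := by simp [← map_ofNat C 2]

/-- Hamiltonian triangle case. -/
theorem hamiltonian_triangle
    (l1 l2 l3 l4 l5 l6 : PowerSeries ℝ)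
    (v1 v3 v5 v7 : PowerSeries ℝ)
    (hv1 : v1 = l1)
    (hv3 : v3 = l5 * (l3 - l6))
    (hv5 : v5 = l2 * l4 * (l3 - l6) * (l4 + 5 * l3 - 5 * l6))
    (hv7 : v7 = l2 * l4 * (l3 - l6) ^ 2 * (l3 * l6 - 2 * l6 ^ 2 - l2 ^ 2))
    (h10 : coeff 0 l1 = 0)
    (h20 : coeff 0 l2 = 0)
    (h40 : coeff 0 l4 = 0)
    (h50 : coeff 0 l5 = 0)
    (h36 : coeff 0 l3 = coeff 0 l6)
    (h60 : coeff 0 l6 ≠ 0) :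
    coeff 1 v3 = 0 ∧ coeff 1 v5 = 0 ∧ coeff 1 v7 = 0 ∧
    coeff 2 v3 = (coeff 1 l3 - coeff 1 l6) * coeff 1 l5 ∧
    coeff 2 v5 = 0 ∧ coeff 2 v7 = 0 ∧
    coeff 3 v5 = 0 ∧ coeff 3 v7 = 0 ∧
    (coeff 1 l3 ≠ coeff 1 l6 → coeff 1 l1 = 0 → coeff 2 l1 = 0 → coeff 3 l1 = 0 →
      coeff 1 l5 = 0 → coeff 2 l5 = 0 →
      coeff 4 v1 = coeff 4 l1 ∧
      coeff 4 v3 = (coeff 1 l3 - coeff 1 l6) * coeff 3 l5 ∧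
      coeff 4 v5 = coeff 1 l2 * coeff 1 l4 * (coeff 1 l3 - coeff 1 l6)
        * (coeff 1 l4 + 5 * coeff 1 l3 - 5 * coeff 1 l6) ∧
      coeff 4 v7 = -((coeff 0 l6) ^ 2 * coeff 1 l2 * coeff 1 l4 * (coeff 1 l3 - coeff 1 l6) ^ 2)) ∧
    (coeff 1 l3 = coeff 1 l6 → coeff 1 l5 = 0 → coeff 2 l5 = 0 →
      (∀ j : ℕ, 1 ≤ j → j ≤ 4 → coeff j l1 = 0) →
      (∀ j : ℕ, 1 ≤ j → j ≤ 4 →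
        coeff j v1 = 0 ∧ coeff j v3 = 0 ∧ coeff j v5 = 0 ∧ coeff j v7 = 0) ∧
      coeff 5 v1 = coeff 5 l1 ∧
      coeff 5 v3 = (coeff 2 l3 - coeff 2 l6) * coeff 3 l5 ∧
      coeff 5 v5 = coeff 1 l2 * (coeff 1 l4) ^ 2 * (coeff 2 l3 - coeff 2 l6) ∧
      coeff 5 v7 = 0) := by
  subst hv1 hv3 hv5 hv7
  refine ⟨?_, ?_, ?_, ?_, ?_, ?_, ?_, ?_, ?_, ?_⟩
  · simp only [pow_two, cm_aux, Finset.sum_range_succ, Finset.sum_range_zero, map_sub, map_add,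
      c5_aux, c2_aux, coeff_C, h10, h20, h40, h50, h36]; norm_num
  · simp only [pow_two, cm_aux, Finset.sum_range_succ, Finset.sum_range_zero, map_sub, map_add,
      c5_aux, c2_aux, coeff_C, h10, h20, h40, h50, h36]; norm_num
  · simp only [pow_two, cm_aux, Finset.sum_range_succ, Finset.sum_range_zero, map_sub, map_add,
      c5_aux, c2_aux, coeff_C, h10, h20, h40, h50, h36]; norm_num
  · simp only [pow_two, cm_aux, Finset.sum_range_succ, Finset.sum_range_zero, map_sub, map_add,
      c5_aux, c2_aux, coeff_C, h10, h20, h40, h50, h36]; norm_num; try ring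
  · simp only [pow_two, cm_aux, Finset.sum_range_succ, Finset.sum_range_zero, map_sub, map_add,
      c5_aux, c2_aux, coeff_C, h10, h20, h40, h50, h36]; norm_num
  · simp only [pow_two, cm_aux, Finset.sum_range_succ, Finset.sum_range_zero, map_sub, map_add,
      c5_aux, c2_aux, coeff_C, h10, h20, h40, h50, h36]; norm_num
  · simp only [pow_two, cm_aux, Finset.sum_range_succ, Finset.sum_range_zero, map_sub, map_add,
      c5_aux, c2_aux, coeff_C, h10, h20, h40, h50, h36]; norm_num; try ring
  · simp only [pow_two, cm_aux, Finset.sum_range_succ, Finset.sum_range_zero, map_sub, map_add,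
      c5_aux, c2_aux, coeff_C, h10, h20, h40, h50, h36]; norm_num; try ring
  · intro _ h11 h12 h13 h51 h52
    refine ⟨rfl, ?_, ?_, ?_⟩ <;>
    · simp only [pow_two, cm_aux, Finset.sum_range_succ, Finset.sum_range_zero, map_sub, map_add,
        c5_aux, c2_aux, coeff_C, h10, h20, h40, h50, h36, h11, h12, h13, h51, h52]
      norm_num; try ring
  · intro h36' h51 h52 h1j
    have h11 := h1j 1 (by norm_num) (by norm_num)
    have h12 := h1j 2 (by norm_num) (by norm_num)
    have h13 := h1j 3 (by norm_num) (by norm_num)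
    have h14 := h1j 4 (by norm_num) (by norm_num)
    constructor
    · intro j hj1 hj4
      interval_cases j <;>
      refine ⟨by assumption, ?_, ?_, ?_⟩ <;>
      · simp only [pow_two, cm_aux, Finset.sum_range_succ, Finset.sum_range_zero, map_sub, map_add,
          c5_aux, c2_aux, coeff_C, h10, h20, h40, h50, h36, h36', h51, h52, h11, h12, h13, h14]
        norm_num <;> try ring
    · refine ⟨rfl, ?_, ?_, ?_⟩ <;>
      · simp only [pow_two, cm_aux, Finset.sum_range_succ, Finset.sum_range_zero, map_sub, map_add,
          c5_aux, c2_aux, coeff_C, h10, h20, h40, h50, h36, h36', h51, h52, h11, h12, h13, h14]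
        norm_num <;> try ring
end

section
/- (Linear center case.) Assume λ_{i,0} = 0 for all i = 1,…,6, and moreover λ_{1,j} = 0 for 1 ≤ j ≤ 5, λ_{5,j} = 0 for 1 ≤ j ≤ 4, λ_{4,1} = 5(λ_{6,1} − λ_{3,1}), λ_{4,2} = 5(λ_{6,2} − λ_{3,2}), λ_{3,1} ≠ λ_{6,1} and λ_{2,1} ≠ 0. Then v̄_{1,j} = v̄_{3,j} = v̄_{5,j} = v̄_{7,j} = 0 for all 1 ≤ j ≤ 5, and v̄_{1,6} = λ_{1,6}, v̄_{3,6} = (λ_{3,1} − λ_{6,1}) λ_{5,5}, v̄_{5,6} = λ_{2,1} λ_{4,1}(λ_{3,1} − λ_{6,1})(λ_{4,3}+5λ_{3,3}−5λ_{6,3}), and v̄_{7,6} = λ_{2,1} λ_{4,1}(λ_{3,1} − λ_{6,1})²(λ_{3,1}λ_{6,1} − 2λ_{6,1}² − λ_{2,1}²). -/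
open PowerSeries

private lemma cmr (f g : PowerSeries ℝ) (n : ℕ) :
    coeff n (f * g) = ∑ i ∈ Finset.range (n + 1), coeff i f * coeff (n - i) g := by
  rw [coeff_mul, Finset.Nat.sum_antidiagonal_eq_sum_range_succ_mk]

private lemma zmul (f g : PowerSeries ℝ) (a b : ℕ)
    (hf : ∀ i < a, coeff i f = 0) (hg : ∀ i < b, coeff i g = 0) :
    ∀ n < a + b, coeff n (f * g) = 0 := by
  intro n hn
  rw [cmr]
  apply Finset.sum_eq_zero
  intro i hi
  simp only [Finset.mem_range] at hi
  rcases lt_or_ge i a with h | h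
  · simp [hf i h]
  · have : n - i < b := by omega
    simp [hg _ this]

private lemma cmul5 (f : PowerSeries ℝ) (n : ℕ) :
    coeff n (5 * f) = 5 * coeff n f := by
  rw [show (5 : PowerSeries ℝ) = C (5 : ℝ) from (map_ofNat (C (R := ℝ)) 5).symm, coeff_C_mul]

/-- Linear center case (quadratic perturbations, essential order 6). -/
theorem linear_center_quadratic
    (l1 l2 l3 l4 l5 l6 : PowerSeries ℝ)
    (v1 v3 v5 v7 : PowerSeries ℝ)
    (hv1 : v1 = l1)
    (hv3 : v3 = l5 * (l3 - l6))
    (hv5 : v5 = l2 * l4 * (l3 - l6) * (l4 + 5 * l3 - 5 * l6))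
    (hv7 : v7 = l2 * l4 * (l3 - l6) ^ 2 * (l3 * l6 - 2 * l6 ^ 2 - l2 ^ 2))
    (h10 : coeff 0 l1 = 0)
    (h20 : coeff 0 l2 = 0)
    (h30 : coeff 0 l3 = 0)
    (h40 : coeff 0 l4 = 0)
    (h50 : coeff 0 l5 = 0)
    (h60 : coeff 0 l6 = 0)
    (hl1 : ∀ j : ℕ, 1 ≤ j → j ≤ 5 → coeff j l1 = 0)
    (hl5 : ∀ j : ℕ, 1 ≤ j → j ≤ 4 → coeff j l5 = 0)
    (hl41 : coeff 1 l4 = 5 * (coeff 1 l6 - coeff 1 l3))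
    (hl42 : coeff 2 l4 = 5 * (coeff 2 l6 - coeff 2 l3))
    (h36 : coeff 1 l3 ≠ coeff 1 l6)
    (h21 : coeff 1 l2 ≠ 0) :
    (∀ j : ℕ, 1 ≤ j → j ≤ 5 →
      coeff j v1 = 0 ∧ coeff j v3 = 0 ∧ coeff j v5 = 0 ∧ coeff j v7 = 0) ∧
    coeff 6 v1 = coeff 6 l1 ∧
    coeff 6 v3 = (coeff 1 l3 - coeff 1 l6) * coeff 5 l5 ∧
    coeff 6 v5 = coeff 1 l2 * coeff 1 l4 * (coeff 1 l3 - coeff 1 l6)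
      * (coeff 3 l4 + 5 * coeff 3 l3 - 5 * coeff 3 l6) ∧
    coeff 6 v7 = coeff 1 l2 * coeff 1 l4 * (coeff 1 l3 - coeff 1 l6) ^ 2
      * (coeff 1 l3 * coeff 1 l6 - 2 * (coeff 1 l6) ^ 2 - (coeff 1 l2) ^ 2) := by
  -- basic vanishing facts
  have h2 : ∀ i < 1, coeff i l2 = 0 := by intro i hi; interval_cases i; exact h20
  have h4 : ∀ i < 1, coeff i l4 = 0 := by intro i hi; interval_cases i; exact h40
  have hC : ∀ i < 1, coeff i (l3 - l6) = 0 := by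
    intro i hi; interval_cases i; rw [map_sub, h30, h60, sub_zero]
  have hL5 : ∀ i < 5, coeff i l5 = 0 := by
    intro i hi
    rcases Nat.eq_zero_or_pos i with rfl | hp
    · exact h50
    · exact hl5 i hp (by omega)
  have hD : ∀ i < 3, coeff i (l4 + 5 * l3 - 5 * l6) = 0 := by
    intro i hi
    interval_cases i
    · simp only [map_sub, map_add, cmul5, h30, h40, h60]; ring
    · simp only [map_sub, map_add, cmul5, hl41]; ring
    · simp only [map_sub, map_add, cmul5, hl42]; ring
  have hE : ∀ i < 2, coeff i (l3 * l6 - 2 * l6 ^ 2 - l2 ^ 2) = 0 := by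
    have e2 : (2 : PowerSeries ℝ) * l6 ^ 2 = l6 * l6 + l6 * l6 := by ring
    have e6 : l6 ^ 2 = l6 * l6 := sq l6
    have e2' : l2 ^ 2 = l2 * l2 := sq l2
    intro i hi
    interval_cases i <;>
      simp [e2, e2', map_sub, map_add, cmr, Finset.sum_range_succ, h20, h30, h60]
  -- vanishing of products
  have hP : ∀ i < 2, coeff i (l2 * l4) = 0 := zmul l2 l4 1 1 h2 h4
  have hQ : ∀ i < 3, coeff i (l2 * l4 * (l3 - l6)) = 0 := zmul _ _ 2 1 hP hC
  have hV5 : ∀ i < 6, coeff i (l2 * l4 * (l3 - l6) * (l4 + 5 * l3 - 5 * l6)) = 0 :=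
    zmul _ _ 3 3 hQ hD
  have hC2 : ∀ i < 2, coeff i ((l3 - l6) ^ 2) = 0 := by
    rw [sq]; exact zmul _ _ 1 1 hC hC
  have hT : ∀ i < 4, coeff i (l2 * l4 * (l3 - l6) ^ 2) = 0 := zmul _ _ 2 2 hP hC2
  have hV7 : ∀ i < 6,
      coeff i (l2 * l4 * (l3 - l6) ^ 2 * (l3 * l6 - 2 * l6 ^ 2 - l2 ^ 2)) = 0 :=
    zmul _ _ 4 2 hT hE
  have hV3 : ∀ i < 6, coeff i (l5 * (l3 - l6)) = 0 := zmul _ _ 5 1 hL5 hC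
  -- key degree-6 building blocks
  have hP2 : coeff 2 (l2 * l4) = coeff 1 l2 * coeff 1 l4 := by
    rw [cmr]; simp [Finset.sum_range_succ, h20, h40]
  have hQ3 : coeff 3 (l2 * l4 * (l3 - l6)) =
      coeff 1 l2 * coeff 1 l4 * (coeff 1 l3 - coeff 1 l6) := by
    rw [cmr]
    simp [Finset.sum_range_succ, hP 0 (by norm_num), hP 1 (by norm_num), hP2,
      h30, h60, map_sub]
  have hC22 : coeff 2 ((l3 - l6) ^ 2) = (coeff 1 l3 - coeff 1 l6) ^ 2 := by
    rw [sq, cmr]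
    simp [Finset.sum_range_succ, h30, h60, map_sub]
    ring
  have hT4 : coeff 4 (l2 * l4 * (l3 - l6) ^ 2) =
      coeff 1 l2 * coeff 1 l4 * (coeff 1 l3 - coeff 1 l6) ^ 2 := by
    rw [cmr]
    simp [Finset.sum_range_succ, hP 0 (by norm_num), hP 1 (by norm_num), hP2,
      hC2 0 (by norm_num), hC2 1 (by norm_num), hC22]
  have hE0 : coeff 0 (l3 * l6 - 2 * l6 ^ 2 - l2 ^ 2) = 0 := hE 0 (by norm_num)
  have hE1 : coeff 1 (l3 * l6 - 2 * l6 ^ 2 - l2 ^ 2) = 0 := hE 1 (by norm_num)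
  have hD0 : coeff 0 (l4 + 5 * l3 - 5 * l6) = 0 := hD 0 (by norm_num)
  have hD1 : coeff 1 (l4 + 5 * l3 - 5 * l6) = 0 := hD 1 (by norm_num)
  have hD2 : coeff 2 (l4 + 5 * l3 - 5 * l6) = 0 := hD 2 (by norm_num)
  have hE2 : coeff 2 (l3 * l6 - 2 * l6 ^ 2 - l2 ^ 2) =
      coeff 1 l3 * coeff 1 l6 - 2 * (coeff 1 l6) ^ 2 - (coeff 1 l2) ^ 2 := by
    have e2 : (2 : PowerSeries ℝ) * l6 ^ 2 = l6 * l6 + l6 * l6 := by ring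
    have e2' : l2 ^ 2 = l2 * l2 := sq l2
    simp [e2, e2', map_sub, map_add, cmr, Finset.sum_range_succ, h20, h30, h60]
    ring
  have hD3 : coeff 3 (l4 + 5 * l3 - 5 * l6) =
      coeff 3 l4 + 5 * coeff 3 l3 - 5 * coeff 3 l6 := by
    simp [cmul5]
  refine ⟨?_, ?_, ?_, ?_, ?_⟩
  · intro j hj1 hj5
    refine ⟨?_, ?_, ?_, ?_⟩
    · rw [hv1]; exact hl1 j hj1 hj5
    · rw [hv3]; exact hV3 j (by omega)
    · rw [hv5]; exact hV5 j (by omega)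
    · rw [hv7]; exact hV7 j (by omega)
  · rw [hv1]
  · rw [hv3, cmr]
    simp [Finset.sum_range_succ, hL5 0 (by norm_num), hL5 1 (by norm_num),
      hL5 2 (by norm_num), hL5 3 (by norm_num), hL5 4 (by norm_num),
      h30, h60, map_sub]
    ring
  · rw [hv5, cmr]
    rw [Finset.sum_range_succ, Finset.sum_range_succ, Finset.sum_range_succ,
      Finset.sum_range_succ, Finset.sum_range_succ, Finset.sum_range_succ,
      Finset.sum_range_succ]
    norm_num [hQ 0 (by norm_num), hQ 1 (by norm_num), hQ 2 (by norm_num),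
      hQ3, hD0, hD1, hD2, hD3]
  · rw [hv7, cmr]
    rw [Finset.sum_range_succ, Finset.sum_range_succ, Finset.sum_range_succ,
      Finset.sum_range_succ, Finset.sum_range_succ, Finset.sum_range_succ,
      Finset.sum_range_succ]
    norm_num [hT 0 (by norm_num), hT 1 (by norm_num), hT 2 (by norm_num),
      hT 3 (by norm_num), hT4, hE0, hE1, hE2]
end

section
/- (Cubic generic Hamiltonian case, first subcase.) Assume λ₀ = a₀ = ξ₀ = 0, ν₀² + θ₀² ≠ 0 and ν₀² + ω₀² ≠ 0. Let k ≥ 1 be an integer and suppose v̄_{1,j} = v̄_{3,j} = v̄_{5,j} = v̄_{7,j} = 0 for all 0 ≤ j ≤ k−1. Then v̄_{1,k} = λ_k, v̄_{3,k} = ξ_k, v̄_{5,k} = ν₀ a_k, v̄_{7,k} = ω₀ θ₀ a_k, and v̄_{9,k} = v̄_{11,k} = 0. -/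
open PowerSeries

lemma coeff_mul_eq_aux (b a : PowerSeries ℝ) (n : ℕ)
    (h : ∀ i < n, coeff i a = 0) :
    coeff n (b * a) = coeff 0 b * coeff n a := by
  rw [coeff_mul]
  apply Finset.sum_eq_single (0, n)
  · intro p hp hne
    rw [Finset.HasAntidiagonal.mem_antidiagonal] at hp
    have h2 : p.2 < n := by
      rcases lt_or_eq_of_le (le_of_add_le_right hp.le) with h' | h'
      · exact h'
      · exfalso; apply hne
        have : p.1 = 0 := by omega
        exact Prod.ext this h'
    rw [h p.2 h2, mul_zero]
  · intro hmem
    exact absurd (Finset.HasAntidiagonal.mem_antidiagonal.2 (by simp)) hmem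

/-- Cubic generic Hamiltonian case, first subcase. -/
theorem cubic_generic_hamiltonian_case1
    (lam w th a e m xi nu : PowerSeries ℝ)
    (v1 v3 v5 v7 v9 v11 : PowerSeries ℝ)
    (hv1 : v1 = lam)
    (hv3 : v3 = xi)
    (hv5 : v5 = nu * a)
    (hv7 : v7 = w * th * a)
    (hv9 : v9 = th * a ^ 2 * e)
    (hv11 : v11 = th * (4 * (m ^ 2 + th ^ 2) - a ^ 2) * a ^ 2)
    (hlam0 : coeff 0 lam = 0)
    (ha0 : coeff 0 a = 0)
    (hxi0 : coeff 0 xi = 0)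
    (hgen1 : (coeff 0 nu) ^ 2 + (coeff 0 th) ^ 2 ≠ 0)
    (hgen2 : (coeff 0 nu) ^ 2 + (coeff 0 w) ^ 2 ≠ 0)
    (k : ℕ) (hk : 1 ≤ k)
    (hvan : ∀ j < k, coeff j v1 = 0 ∧ coeff j v3 = 0 ∧ coeff j v5 = 0 ∧ coeff j v7 = 0) :
    coeff k v1 = coeff k lam ∧
    coeff k v3 = coeff k xi ∧
    coeff k v5 = coeff 0 nu * coeff k a ∧
    coeff k v7 = coeff 0 w * coeff 0 th * coeff k a ∧
    coeff k v9 = 0 ∧ coeff k v11 = 0 := by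
  have ha : ∀ j, j < k → coeff j a = 0 := by
    intro j
    induction j using Nat.strong_induction_on with
    | _ j ih =>
      intro hj
      by_cases hnu : coeff 0 nu = 0
      · have hth : coeff 0 th ≠ 0 := by
          intro h; exact hgen1 (by rw [hnu, h]; ring)
        have hw : coeff 0 w ≠ 0 := by
          intro h; exact hgen2 (by rw [hnu, h]; ring)
        have h7 := (hvan j hj).2.2.2
        rw [hv7, coeff_mul_eq_aux (w * th) a j (fun i hi => ih i hi (hi.trans hj))] at h7
        have h0 : coeff 0 (w * th) = coeff 0 w * coeff 0 th := by
          rw [coeff_mul_eq_aux w th 0 (by intro i hi; omega)]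
        rw [h0] at h7
        have := mul_ne_zero hw hth
        exact (mul_eq_zero.1 h7).resolve_left this
      · have h5 := (hvan j hj).2.2.1
        rw [hv5, coeff_mul_eq_aux nu a j (fun i hi => ih i hi (hi.trans hj))] at h5
        exact (mul_eq_zero.1 h5).resolve_left hnu
  have ha0' : coeff 0 a = 0 := ha 0 hk
  have hz : ∀ i < (0:ℕ), coeff i a = 0 := by intro i hi; omega
  refine ⟨by rw [hv1], by rw [hv3], ?_, ?_, ?_, ?_⟩
  · rw [hv5, coeff_mul_eq_aux nu a k ha]
  · rw [hv7, coeff_mul_eq_aux (w * th) a k ha, coeff_mul_eq_aux w th 0 (by omega)]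
  · have h9 : v9 = (th * e * a) * a := by rw [hv9]; ring
    rw [h9, coeff_mul_eq_aux (th * e * a) a k ha,
      coeff_mul_eq_aux (th * e) a 0 hz, ha0']
    ring
  · have h11 : v11 = (th * (4 * (m ^ 2 + th ^ 2) - a ^ 2) * a) * a := by rw [hv11]; ring
    rw [h11, coeff_mul_eq_aux _ a k ha, coeff_mul_eq_aux _ a 0 hz, ha0']
    ring
end

section
/- (Cubic generic symmetric case.) Assume λ₀ = ξ₀ = ν₀ = θ₀ = 0, a₀ ≠ 0, and ω₀² + η₀² + (4μ₀² − a₀²)² ≠ 0. Let k ≥ 1 be an integer and suppose v̄_{1,j} = v̄_{3,j} = v̄_{5,j} = v̄_{7,j} = v̄_{9,j} = v̄_{11,j} = 0 for all 0 ≤ j ≤ k−1. Then v̄_{1,k} = λ_k, v̄_{3,k} = ξ_k, v̄_{5,k} = a₀ ν_k, v̄_{7,k} = a₀ ω₀ θ_k, v̄_{9,k} = a₀² η₀ θ_k, and v̄_{11,k} = a₀²(4μ₀² − a₀²) θ_k. -/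
open PowerSeries

lemma coeff_mul_stable (k : ℕ) (f g : PowerSeries ℝ)
    (hf : ∀ j < k, coeff j f = 0) :
    coeff k (f * g) = coeff k f * coeff 0 g := by
  rw [coeff_mul, Finset.sum_eq_single (k, 0)]
  · rintro ⟨i, j⟩ hmem hne
    rw [Finset.HasAntidiagonal.mem_antidiagonal] at hmem
    have hi : i < k := by
      rcases lt_or_ge i k with h | h
      · exact h
      · exfalso; apply hne; have : i = k := by omega
        subst this; simp at hmem ⊢; omega
    rw [hf i hi, zero_mul]
  · intro h
    exact absurd (Finset.HasAntidiagonal.mem_antidiagonal.2 (by simp)) h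

/-- Cubic generic symmetric case. -/
theorem cubic_generic_symmetric
    (lam w th a e m xi nu : PowerSeries ℝ)
    (v1 v3 v5 v7 v9 v11 : PowerSeries ℝ)
    (hv1 : v1 = lam)
    (hv3 : v3 = xi)
    (hv5 : v5 = nu * a)
    (hv7 : v7 = w * th * a)
    (hv9 : v9 = th * a ^ 2 * e)
    (hv11 : v11 = th * (4 * (m ^ 2 + th ^ 2) - a ^ 2) * a ^ 2)
    (hlam0 : coeff 0 lam = 0)
    (hxi0 : coeff 0 xi = 0)
    (hnu0 : coeff 0 nu = 0)
    (hth0 : coeff 0 th = 0)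
    (ha0 : coeff 0 a ≠ 0)
    (hgen : (coeff 0 w) ^ 2 + (coeff 0 e) ^ 2 + (4 * (coeff 0 m) ^ 2 - (coeff 0 a) ^ 2) ^ 2 ≠ 0)
    (k : ℕ) (hk : 1 ≤ k)
    (hvan : ∀ j < k, coeff j v1 = 0 ∧ coeff j v3 = 0 ∧ coeff j v5 = 0 ∧
      coeff j v7 = 0 ∧ coeff j v9 = 0 ∧ coeff j v11 = 0) :
    coeff k v1 = coeff k lam ∧
    coeff k v3 = coeff k xi ∧
    coeff k v5 = coeff 0 a * coeff k nu ∧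
    coeff k v7 = coeff 0 a * coeff 0 w * coeff k th ∧
    coeff k v9 = (coeff 0 a) ^ 2 * coeff 0 e * coeff k th ∧
    coeff k v11 = (coeff 0 a) ^ 2 * (4 * (coeff 0 m) ^ 2 - (coeff 0 a) ^ 2) * coeff k th := by
  -- rewrite products so that the low-order factor comes first
  have hv7' : v7 = th * (w * a) := by rw [hv7]; ring
  have hv9' : v9 = th * (a ^ 2 * e) := by rw [hv9]; ring
  have hv11' : v11 = th * ((4 * (m ^ 2 + th ^ 2) - a ^ 2) * a ^ 2) := by rw [hv11]; ring
  -- constant coefficients of the second factors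
  have c0 : ∀ f g : PowerSeries ℝ, coeff 0 (f * g) = coeff 0 f * coeff 0 g := by
    intro f g
    simp [coeff_zero_eq_constantCoeff, map_mul]
  have c7 : coeff 0 (w * a) = coeff 0 w * coeff 0 a := c0 _ _
  have c9 : coeff 0 (a ^ 2 * e) = (coeff 0 a) ^ 2 * coeff 0 e := by
    simp [coeff_zero_eq_constantCoeff, map_mul, map_pow]
  have c11 : coeff 0 ((4 * (m ^ 2 + th ^ 2) - a ^ 2) * a ^ 2)
      = (4 * (coeff 0 m) ^ 2 - (coeff 0 a) ^ 2) * (coeff 0 a) ^ 2 := by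
    have : constantCoeff th = 0 := by rwa [← coeff_zero_eq_constantCoeff]
    simp [coeff_zero_eq_constantCoeff, map_mul, map_pow, map_sub, map_add, map_ofNat, this]
  -- nu vanishes below k
  have hnu : ∀ j < k, coeff j nu = 0 := by
    intro j
    induction j using Nat.strong_induction_on with
    | _ j ih =>
      intro hj
      have h5 := (hvan j hj).2.2.1
      rw [hv5, coeff_mul_stable j nu a (fun i hi => ih i hi (hi.trans hj))] at h5
      exact (mul_eq_zero.mp h5).resolve_right ha0
  -- th vanishes below k
  have hth : ∀ j < k, coeff j th = 0 := by
    intro j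
    induction j using Nat.strong_induction_on with
    | _ j ih =>
      intro hj
      have hlow : ∀ i < j, coeff i th = 0 := fun i hi => ih i hi (hi.trans hj)
      have h7 := (hvan j hj).2.2.2.1
      have h9 := (hvan j hj).2.2.2.2.1
      have h11 := (hvan j hj).2.2.2.2.2
      rw [hv7', coeff_mul_stable j th _ hlow, c7] at h7
      rw [hv9', coeff_mul_stable j th _ hlow, c9] at h9
      rw [hv11', coeff_mul_stable j th _ hlow, c11] at h11
      by_contra hne
      have e7 : coeff 0 w = 0 := by
        rcases mul_eq_zero.mp h7 with h | h
        · exact absurd h hne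
        · exact (mul_eq_zero.mp h).resolve_right ha0
      have e9 : coeff 0 e = 0 := by
        rcases mul_eq_zero.mp h9 with h | h
        · exact absurd h hne
        · exact (mul_eq_zero.mp h).resolve_left (pow_ne_zero 2 ha0)
      have e11 : 4 * (coeff 0 m) ^ 2 - (coeff 0 a) ^ 2 = 0 := by
        rcases mul_eq_zero.mp h11 with h | h
        · exact absurd h hne
        · exact (mul_eq_zero.mp h).resolve_right (pow_ne_zero 2 ha0)
      apply hgen
      rw [e7, e9, e11]; ring
  -- now compute the coefficients at k
  refine ⟨by rw [hv1], by rw [hv3], ?_, ?_, ?_, ?_⟩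
  · rw [hv5, coeff_mul_stable k nu a hnu]; ring
  · rw [hv7', coeff_mul_stable k th _ hth, c7]; ring
  · rw [hv9', coeff_mul_stable k th _ hth, c9]; ring
  · rw [hv11', coeff_mul_stable k th _ hth, c11]; ring
end

section
/- (Cubic generic Darboux case.) Assume λ₀ = ξ₀ = ν₀ = ω₀ = η₀ = 0, 4(μ₀² + θ₀²) − a₀² = 0, a₀ ≠ 0 and θ₀ ≠ 0. Then v̄_{1,1} = λ₁, v̄_{3,1} = ξ₁, v̄_{5,1} = a₀ ν₁, v̄_{7,1} = a₀ θ₀ ω₁, v̄_{9,1} = a₀² θ₀ η₁, and v̄_{11,1} = 2 a₀² θ₀ (4μ₀μ₁ + 4θ₀θ₁ − a₀a₁). -/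
open PowerSeries

/-- Cubic generic Darboux case. -/
theorem cubic_generic_darboux
    (lam w th a e m xi nu : PowerSeries ℝ)
    (v1 v3 v5 v7 v9 v11 : PowerSeries ℝ)
    (hv1 : v1 = lam)
    (hv3 : v3 = xi)
    (hv5 : v5 = nu * a)
    (hv7 : v7 = w * th * a)
    (hv9 : v9 = th * a ^ 2 * e)
    (hv11 : v11 = th * (4 * (m ^ 2 + th ^ 2) - a ^ 2) * a ^ 2)
    (hlam0 : coeff 0 lam = 0)
    (hxi0 : coeff 0 xi = 0)
    (hnu0 : coeff 0 nu = 0)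
    (hw0 : coeff 0 w = 0)
    (he0 : coeff 0 e = 0)
    (hD : 4 * ((coeff 0 m) ^ 2 + (coeff 0 th) ^ 2) - (coeff 0 a) ^ 2 = 0)
    (ha0 : coeff 0 a ≠ 0)
    (hth0 : coeff 0 th ≠ 0) :
    coeff 1 v1 = coeff 1 lam ∧
    coeff 1 v3 = coeff 1 xi ∧
    coeff 1 v5 = coeff 0 a * coeff 1 nu ∧
    coeff 1 v7 = coeff 0 a * coeff 0 th * coeff 1 w ∧
    coeff 1 v9 = (coeff 0 a) ^ 2 * coeff 0 th * coeff 1 e ∧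
    coeff 1 v11 = 2 * (coeff 0 a) ^ 2 * coeff 0 th
      * (4 * coeff 0 m * coeff 1 m + 4 * coeff 0 th * coeff 1 th - coeff 0 a * coeff 1 a) := by
  subst hv1 hv3 hv5 hv7 hv9 hv11
  have h4 : (coeff 1) (4 : PowerSeries ℝ) = 0 := by
    simp [show (4 : PowerSeries ℝ) = C 4 by simp [map_ofNat]]
  refine ⟨rfl, rfl, ?_, ?_, ?_, ?_⟩ <;>
    simp only [coeff_one_mul, coeff_one_pow, map_mul, map_sub, map_add, map_pow, map_ofNat,
      coeff_zero_eq_constantCoeff, h4] at hnu0 hw0 he0 hD ⊢ <;>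
    (try simp only [hnu0, hw0, he0])
  · ring
  · ring
  · ring
  · linear_combination ((coeff 1) th * (constantCoeff a) ^ 2
      + 2 * (coeff 1) a * constantCoeff a * constantCoeff th) * hD
end

section
/- (Cubic linear center case.) Assume λ₀ = ξ₀ = a₀ = ν₀ = θ₀ = ω₀ = η₀ = μ₀ = 0, and moreover λ_j = ξ_j = 0 for 1 ≤ j ≤ 4, ν₁ = ν₂ = ν₃ = 0, ω₁ = ω₂ = 0, and η₁ = 0. Then v̄_{1,j} = v̄_{3,j} = v̄_{5,j} = v̄_{7,j} = v̄_{9,j} = v̄_{11,j} = 0 for all 0 ≤ j ≤ 4, and v̄_{1,5} = λ₅, v̄_{3,5} = ξ₅, v̄_{5,5} = a₁ ν₄, v̄_{7,5} = a₁ θ₁ ω₃, v̄_{9,5} = a₁² θ₁ η₂, and v̄_{11,5} = a₁² θ₁ (4(μ₁² + θ₁²) − a₁²). -/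
open PowerSeries

/-- Cubic linear center case (essential order 5). -/
theorem cubic_linear_center
    (lam w th a e m xi nu : PowerSeries ℝ)
    (v1 v3 v5 v7 v9 v11 : PowerSeries ℝ)
    (hv1 : v1 = lam)
    (hv3 : v3 = xi)
    (hv5 : v5 = nu * a)
    (hv7 : v7 = w * th * a)
    (hv9 : v9 = th * a ^ 2 * e)
    (hv11 : v11 = th * (4 * (m ^ 2 + th ^ 2) - a ^ 2) * a ^ 2)
    (hlam0 : coeff 0 lam = 0)
    (hxi0 : coeff 0 xi = 0)
    (ha0 : coeff 0 a = 0)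
    (hnu0 : coeff 0 nu = 0)
    (hth0 : coeff 0 th = 0)
    (hw0 : coeff 0 w = 0)
    (he0 : coeff 0 e = 0)
    (hm0 : coeff 0 m = 0)
    (hlamxi : ∀ j : ℕ, 1 ≤ j → j ≤ 4 → coeff j lam = 0 ∧ coeff j xi = 0)
    (hnu1 : coeff 1 nu = 0) (hnu2 : coeff 2 nu = 0) (hnu3 : coeff 3 nu = 0)
    (hw1 : coeff 1 w = 0) (hw2 : coeff 2 w = 0)
    (he1 : coeff 1 e = 0) :
    (∀ j : ℕ, j ≤ 4 →
      coeff j v1 = 0 ∧ coeff j v3 = 0 ∧ coeff j v5 = 0 ∧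
      coeff j v7 = 0 ∧ coeff j v9 = 0 ∧ coeff j v11 = 0) ∧
    coeff 5 v1 = coeff 5 lam ∧
    coeff 5 v3 = coeff 5 xi ∧
    coeff 5 v5 = coeff 1 a * coeff 4 nu ∧
    coeff 5 v7 = coeff 1 a * coeff 1 th * coeff 3 w ∧
    coeff 5 v9 = (coeff 1 a) ^ 2 * coeff 1 th * coeff 2 e ∧
    coeff 5 v11 = (coeff 1 a) ^ 2 * coeff 1 th
      * (4 * ((coeff 1 m) ^ 2 + (coeff 1 th) ^ 2) - (coeff 1 a) ^ 2) := by
  obtain ⟨a', ha⟩ : (X : PowerSeries ℝ) ^ 1 ∣ a :=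
    X_pow_dvd_iff.mpr (by intro k hk; interval_cases k; exact ha0)
  obtain ⟨t', ht⟩ : (X : PowerSeries ℝ) ^ 1 ∣ th :=
    X_pow_dvd_iff.mpr (by intro k hk; interval_cases k; exact hth0)
  obtain ⟨m', hm⟩ : (X : PowerSeries ℝ) ^ 1 ∣ m :=
    X_pow_dvd_iff.mpr (by intro k hk; interval_cases k; exact hm0)
  obtain ⟨e', he⟩ : (X : PowerSeries ℝ) ^ 2 ∣ e :=
    X_pow_dvd_iff.mpr (by intro k hk; interval_cases k; exacts [he0, he1])
  obtain ⟨w', hw⟩ : (X : PowerSeries ℝ) ^ 3 ∣ w :=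
    X_pow_dvd_iff.mpr (by intro k hk; interval_cases k; exacts [hw0, hw1, hw2])
  obtain ⟨n', hn⟩ : (X : PowerSeries ℝ) ^ 4 ∣ nu :=
    X_pow_dvd_iff.mpr (by intro k hk; interval_cases k; exacts [hnu0, hnu1, hnu2, hnu3])
  have ca : coeff 1 a = coeff 0 a' := by rw [ha]; exact coeff_X_pow_mul a' 1 0
  have ct : coeff 1 th = coeff 0 t' := by rw [ht]; exact coeff_X_pow_mul t' 1 0
  have cm : coeff 1 m = coeff 0 m' := by rw [hm]; exact coeff_X_pow_mul m' 1 0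
  have ce : coeff 2 e = coeff 0 e' := by rw [he]; exact coeff_X_pow_mul e' 2 0
  have cw : coeff 3 w = coeff 0 w' := by rw [hw]; exact coeff_X_pow_mul w' 3 0
  have cn : coeff 4 nu = coeff 0 n' := by rw [hn]; exact coeff_X_pow_mul n' 4 0
  have h5 : v5 = X ^ 5 * (n' * a') := by rw [hv5, ha, hn]; ring
  have h7 : v7 = X ^ 5 * (w' * t' * a') := by rw [hv7, ha, ht, hw]; ring
  have h9 : v9 = X ^ 5 * (t' * a' ^ 2 * e') := by rw [hv9, ha, ht, he]; ring
  have h11 : v11 = X ^ 5 * (t' * (4 * (m' ^ 2 + t' ^ 2) - a' ^ 2) * a' ^ 2) := by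
    rw [hv11, ha, ht, hm]; ring
  refine ⟨?_, ?_, ?_, ?_, ?_, ?_, ?_⟩
  · intro j hj
    refine ⟨?_, ?_, ?_, ?_, ?_, ?_⟩
    · rw [hv1]
      rcases Nat.eq_zero_or_pos j with h | h
      · subst h; exact hlam0
      · exact (hlamxi j h hj).1
    · rw [hv3]
      rcases Nat.eq_zero_or_pos j with h | h
      · subst h; exact hxi0
      · exact (hlamxi j h hj).2
    · rw [h5, coeff_X_pow_mul', if_neg (by omega)]
    · rw [h7, coeff_X_pow_mul', if_neg (by omega)]
    · rw [h9, coeff_X_pow_mul', if_neg (by omega)]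
    · rw [h11, coeff_X_pow_mul', if_neg (by omega)]
  · rw [hv1]
  · rw [hv3]
  · rw [h5, ca, cn]
    have : coeff (0 + 5) (X ^ 5 * (n' * a')) = coeff 0 (n' * a') :=
      coeff_X_pow_mul _ 5 0
    rw [show (5 : ℕ) = 0 + 5 from rfl, this]
    simp only [coeff_zero_eq_constantCoeff, map_mul]
    ring
  · rw [h7, ca, ct, cw]
    have : coeff (0 + 5) (X ^ 5 * (w' * t' * a')) = coeff 0 (w' * t' * a') :=
      coeff_X_pow_mul _ 5 0
    rw [show (5 : ℕ) = 0 + 5 from rfl, this]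
    simp only [coeff_zero_eq_constantCoeff, map_mul]
    ring
  · rw [h9, ca, ct, ce]
    have : coeff (0 + 5) (X ^ 5 * (t' * a' ^ 2 * e')) = coeff 0 (t' * a' ^ 2 * e') :=
      coeff_X_pow_mul _ 5 0
    rw [show (5 : ℕ) = 0 + 5 from rfl, this]
    simp only [coeff_zero_eq_constantCoeff, map_mul, map_pow]
    ring
  · rw [h11, ca, ct, cm]
    have : coeff (0 + 5) (X ^ 5 * (t' * (4 * (m' ^ 2 + t' ^ 2) - a' ^ 2) * a' ^ 2))
        = coeff 0 (t' * (4 * (m' ^ 2 + t' ^ 2) - a' ^ 2) * a' ^ 2) :=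
      coeff_X_pow_mul _ 5 0
    rw [show (5 : ℕ) = 0 + 5 from rfl, this]
    simp only [coeff_zero_eq_constantCoeff, map_mul, map_pow, map_sub, map_add, map_ofNat]
    ring
end
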